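/- arXiv:2601.09196 — 2 statements merged into one kernel-verified Lean document; each statement's English description precedes it below -/
import Mathlib

section
/- Let D be an invariant divergence on 𝒫(𝒵) with constant η > 0, let P_1 ≠ P_2 ∈ 𝒫(𝒵) with P* the normalized geometric mean of P_1 and P_2, and let {r_n} be a sequence of positive thresholds with r_n = Θ(1/n). Then there exist a constant M_3 > 0 and N_3 ∈ ℕ such that for all n ≥ N_3, every pair (T,R) ∈ A_{Σ_{𝐏*}}(r_n/(2η) − M_3/n^{3/2}) satisfies D(T‖R) < r_n; that is, A_{Σ_{𝐏*}}(r_n/(2η) − M_3/n^{3/2}) ⊆ {(T,R) ∈ 𝒫²(𝒵) : D(T‖R) < r_n}. -/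
open scoped BigOperators
open Filter MeasureTheory Matrix

namespace TwoSampleTest

variable {m : ℕ}

/-- All probability distributions on the alphabet `Fin (m+1)` (the set `𝒫̄(𝒵)`). -/
def IsDist (P : Fin (m+1) → ℝ) : Prop :=
  (∀ i, 0 ≤ P i) ∧ ∑ i, P i = 1

/-- Strictly positive probability distributions on `Fin (m+1)` (the set `𝒫(𝒵)`). -/
def IsPosDist (P : Fin (m+1) → ℝ) : Prop :=
  (∀ i, 0 < P i) ∧ ∑ i, P i = 1

/-- The open coordinate domain `Ξ ⊆ ℝ^m`. -/
def Xi (m : ℕ) : Set (Fin m → ℝ) :=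
  {x | (∀ i, 0 < x i) ∧ ∑ i, x i < 1}

/-- Coordinate vector (first `m` components) of a distribution on `Fin (m+1)`. -/
def coordOf (P : Fin (m+1) → ℝ) : Fin m → ℝ := fun i => P i.castSucc

/-- Euclidean norm on `ℝ^m`. -/
noncomputable def l2norm (v : Fin m → ℝ) : ℝ := Real.sqrt (∑ i, (v i)^2)

/-- ℓ₁ distance between two distributions. -/
noncomputable def l1dist (P Q : Fin (m+1) → ℝ) : ℝ := ∑ i, |P i - Q i|

/-- A divergence on `𝒫(𝒵)`, viewed through coordinates in `Ξ`. -/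
structure Divergence (m : ℕ) where
  f : (Fin m → ℝ) → (Fin m → ℝ) → ℝ
  smooth : ContDiffOn ℝ (⊤ : ℕ∞)
    (fun p : (Fin m → ℝ) × (Fin m → ℝ) => f p.1 p.2) ((Xi m) ×ˢ (Xi m))
  nonneg : ∀ s ∈ Xi m, ∀ r ∈ Xi m, 0 ≤ f s r
  eq_zero_iff : ∀ s ∈ Xi m, ∀ r ∈ Xi m, (f s r = 0 ↔ s = r)
  taylor : ∀ r ∈ Xi m, ∃ G : Matrix (Fin m) (Fin m) ℝ, G.PosDef ∧
      ∃ C > (0:ℝ), ∃ δ > (0:ℝ), ∀ e : Fin m → ℝ, l2norm e < δ → r + e ∈ Xi m →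
        |f (r + e) r - (1/2) * ∑ i, ∑ j, G i j * e i * e j| ≤ C * (l2norm e)^3
  boundary : ∀ r ∈ Xi m, ∀ S : ℕ → (Fin m → ℝ), (∀ n, S n ∈ Xi m) →
      ∀ L ∈ frontier (Xi m), Filter.Tendsto S Filter.atTop (nhds L) →
        0 < Filter.liminf (fun n => f (S n) r) Filter.atTop

/-- The divergence evaluated at two distributions. -/
noncomputable def Dapp (D : Divergence m) (T R : Fin (m+1) → ℝ) : ℝ :=
  D.f (coordOf T) (coordOf R)

/-- The matrix `A_{D,P}` associated with a divergence `D` at coordinate point `p`: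
`a_{ij} = ½ ∂²D(S‖p)/∂S_i∂S_j` at `S = p`. -/
noncomputable def Amat (D : Divergence m) (p : Fin m → ℝ) : Matrix (Fin m) (Fin m) ℝ :=
  Matrix.of fun i j =>
    (1/2) * fderiv ℝ (fun s => fderiv ℝ (fun s' => D.f s' p) s (Pi.single j 1)) p (Pi.single i 1)

/-- The matrix `Σ_P`. -/
noncomputable def SigmaMat (P : Fin (m+1) → ℝ) : Matrix (Fin m) (Fin m) ℝ :=
  Matrix.of fun i j =>
    if i = j then 1 / P i.castSucc + 1 / P (Fin.last m) else 1 / P (Fin.last m)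

/-- `D` is an invariant divergence with constant `η`. -/
def IsInvariant (D : Divergence m) (η : ℝ) : Prop :=
  ∀ P : Fin (m+1) → ℝ, IsPosDist P → Amat D (coordOf P) = η • SigmaMat P

/-- Quadratic form `vᵀ M v`. -/
noncomputable def quadForm (M : Matrix (Fin m) (Fin m) ℝ) (v : Fin m → ℝ) : ℝ :=
  v ⬝ᵥ M.mulVec v

/-- Type (empirical distribution) of a sequence. -/
noncomputable def typeOf {n : ℕ} (x : Fin n → Fin (m+1)) : Fin (m+1) → ℝ :=
  fun i => ((Finset.univ.filter (fun t => x t = i)).card : ℝ) / n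

/-- Probability of a sequence under i.i.d. sampling from `P`. -/
def probSeq (P : Fin (m+1) → ℝ) {n : ℕ} (x : Fin n → Fin (m+1)) : ℝ := ∏ t, P (x t)

/-- Type-I error of the divergence test with test statistic `Dfun` and threshold `r`,
under common distribution `P`: the probability that `Dfun(T_{X^n}‖T_{Y^n}) ≥ r`. -/
noncomputable def alpha (Dfun : (Fin (m+1) → ℝ) → (Fin (m+1) → ℝ) → ℝ) (r : ℝ)
    (P : Fin (m+1) → ℝ) (n : ℕ) : ℝ :=
  ∑ x : Fin n → Fin (m+1), ∑ y : Fin n → Fin (m+1),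
    if r ≤ Dfun (typeOf x) (typeOf y) then probSeq P x * probSeq P y else 0

/-- Type-II error: the probability under `P₁ × P₂` that `Dfun(T_{X^n}‖T_{Y^n}) < r`. -/
noncomputable def beta (Dfun : (Fin (m+1) → ℝ) → (Fin (m+1) → ℝ) → ℝ) (r : ℝ)
    (P₁ P₂ : Fin (m+1) → ℝ) (n : ℕ) : ℝ :=
  ∑ x : Fin n → Fin (m+1), ∑ y : Fin n → Fin (m+1),
    if Dfun (typeOf x) (typeOf y) < r then probSeq P₁ x * probSeq P₂ y else 0

/-- Kullback-Leibler divergence (with the convention `0 · ln 0 = 0`). -/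
noncomputable def KL (P Q : Fin (m+1) → ℝ) : ℝ := ∑ i, P i * Real.log (P i / Q i)

/-- KL divergence variance. -/
noncomputable def VKL (P Q : Fin (m+1) → ℝ) : ℝ :=
  ∑ i, P i * (Real.log (P i / Q i) - KL P Q)^2

/-- Bhattacharyya distance. -/
noncomputable def DB (P Q : Fin (m+1) → ℝ) : ℝ :=
  - Real.log (∑ i, Real.sqrt (P i * Q i))

/-- The normalized geometric mean `P*` of two distributions. -/
noncomputable def Pstar (P₁ P₂ : Fin (m+1) → ℝ) : Fin (m+1) → ℝ :=
  fun i => Real.sqrt (P₁ i * P₂ i) / ∑ j, Real.sqrt (P₁ j * P₂ j)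

/-- Jensen–Shannon divergence. -/
noncomputable def DJS (T R : Fin (m+1) → ℝ) : ℝ :=
  (1/2) * KL T (fun i => (T i + R i)/2) + (1/2) * KL R (fun i => (T i + R i)/2)

/-- Law of `m` i.i.d. standard Gaussians. -/
noncomputable def stdGaussianPi (m : ℕ) : Measure (Fin m → ℝ) :=
  Measure.pi (fun _ => ProbabilityTheory.gaussianReal 0 1)

/-- Tail probability of the generalized chi-square distribution with weights `lam`:
`P(∑ lam i * U i ^ 2 ≥ c)` for i.i.d. standard normal `U`. -/
noncomputable def genChiSqTail (m : ℕ) (lam : Fin m → ℝ) (c : ℝ) : ℝ :=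
  (stdGaussianPi m {u | c ≤ ∑ i, lam i * (u i)^2}).toReal

/-- Tail probability of the chi-square distribution with `m` degrees of freedom. -/
noncomputable def chiSqTail (m : ℕ) (c : ℝ) : ℝ := genChiSqTail m (fun _ => 1) c

/-- Inverse of the chi-square tail probability. -/
noncomputable def chiSqTailInv (m : ℕ) (ε : ℝ) : ℝ :=
  sInf {c : ℝ | 0 < c ∧ chiSqTail m c ≤ ε}

/-- The linear functional `ℓ_P(T,R)`. -/
noncomputable def ellP (P P₁ P₂ T R : Fin (m+1) → ℝ) : ℝ :=
  ∑ i, (T i - P i) * Real.log (P i / P₁ i) + ∑ i, (R i - P i) * Real.log (P i / P₂ i)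

/-- Membership of `(T,R)` in the set `A_{Σ_P}(r)`. -/
noncomputable def memASigma (P T R : Fin (m+1) → ℝ) (r : ℝ) : Prop :=
  IsPosDist T ∧ IsPosDist R ∧
    quadForm (SigmaMat P) (fun i => coordOf T i - coordOf P i)
      + quadForm (SigmaMat P) (fun i => coordOf R i - coordOf P i) ≤ r

/-- The vector with components `ln(P_i/Q_i) − ln(P_k/Q_k)`, `i = 1,…,k−1`. -/
noncomputable def cvec (P Q : Fin (m+1) → ℝ) : Fin m → ℝ :=
  fun i => Real.log (P i.castSucc / Q i.castSucc) - Real.log (P (Fin.last m) / Q (Fin.last m))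

/-- A type distribution with denominator `n`. -/
def IsTypeDist (n : ℕ) (P : Fin (m+1) → ℝ) : Prop :=
  IsDist P ∧ ∀ i, ∃ a : ℕ, P i = (a : ℝ) / n

/-- The best (largest) type-II error exponent `−(1/n) ln β_n` over all thresholds `r > 0`
whose type-I error is at most `ε` for every common distribution `P ∈ 𝒫(𝒵)`. -/
noncomputable def supExp (Dfun : (Fin (m+1) → ℝ) → (Fin (m+1) → ℝ) → ℝ)
    (P₁ P₂ : Fin (m+1) → ℝ) (ε : ℝ) (n : ℕ) : ℝ :=
  sSup { v : ℝ | ∃ r : ℝ, 0 < r ∧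
    (∀ P : Fin (m+1) → ℝ, IsPosDist P → alpha Dfun r P n ≤ ε) ∧
    v = -(Real.log (beta Dfun r P₁ P₂ n)) / n }

section Helpers

variable {m : ℕ}

noncomputable instance dblNAG {E : Type*} [NormedAddCommGroup E] [NormedSpace ℝ E] :
    NormedAddCommGroup (E →L[ℝ] E →L[ℝ] ℝ) := ContinuousLinearMap.toNormedAddCommGroup

noncomputable instance dblNS {E : Type*} [NormedAddCommGroup E] [NormedSpace ℝ E] :
    NormedSpace ℝ (E →L[ℝ] E →L[ℝ] ℝ) := ContinuousLinearMap.toNormedSpace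

theorem taylor2_bound {E : Type*} [NormedAddCommGroup E] [NormedSpace ℝ E]
    {F : E → ℝ} {U : Set E} (hU : IsOpen U)
    (hF : ContDiffOn ℝ (⊤ : ℕ∞) F U) {z v : E} {M : ℝ}
    (hseg : ∀ u ∈ Set.Icc (0:ℝ) 1, z + u • v ∈ U)
    (hM : ∀ u ∈ Set.Icc (0:ℝ) 1, ‖fderiv ℝ (fderiv ℝ (fderiv ℝ F)) (z + u • v)‖ ≤ M) :
    |F (z + v) - F z - fderiv ℝ F z v - (1/2) * fderiv ℝ (fderiv ℝ F) z v v| ≤ M * ‖v‖^3 := by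
  have hIcc : Convex ℝ (Set.Icc (0:ℝ) 1) := convex_Icc 0 1
  have h0m : (0:ℝ) ∈ Set.Icc (0:ℝ) 1 := by constructor <;> norm_num
  have h1m : (1:ℝ) ∈ Set.Icc (0:ℝ) 1 := by constructor <;> norm_num
  have hM0 : 0 ≤ M := le_trans (norm_nonneg _) (hM 0 h0m)
  have hc0 : 0 ≤ M * ‖v‖ ^ 3 := by positivity
  have hle1 : ((⊤ : ℕ∞) : WithTop ℕ∞) ≠ 0 := by
    simp
  have hletop : ((⊤:ℕ∞) : WithTop ℕ∞) + 1 ≤ ((⊤ : ℕ∞) : WithTop ℕ∞) := by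
    exact_mod_cast le_top
  have hcd : ∀ u ∈ Set.Icc (0:ℝ) 1, ContDiffAt ℝ (⊤ : ℕ∞) F (z + u • v) :=
    fun u hu => hF.contDiffAt (hU.mem_nhds (hseg u hu))
  have hline : ∀ u : ℝ, HasDerivAt (fun u : ℝ => z + u • v) v u := by
    intro u
    simpa using ((hasDerivAt_id u).smul_const v).const_add z
  have g0' : ∀ u ∈ Set.Icc (0:ℝ) 1,
      HasDerivAt (fun u : ℝ => F (z + u • v)) (fderiv ℝ F (z + u • v) v) u := by
    intro u hu
    exact (((hcd u hu).differentiableAt hle1).hasFDerivAt).comp_hasDerivAt u (hline u)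
  have D1 : ∀ u ∈ Set.Icc (0:ℝ) 1,
      HasFDerivAt (fderiv ℝ F) (fderiv ℝ (fderiv ℝ F) (z + u • v)) (z + u • v) := by
    intro u hu
    exact (((hcd u hu).fderiv_right (m := ((⊤:ℕ∞) : WithTop ℕ∞)) hletop).differentiableAt
      hle1).hasFDerivAt
  have g1' : ∀ u ∈ Set.Icc (0:ℝ) 1,
      HasDerivAt (fun u : ℝ => fderiv ℝ F (z + u • v) v)
        (fderiv ℝ (fderiv ℝ F) (z + u • v) v v) u := by
    intro u hu
    have := ((D1 u hu).comp_hasDerivAt u (hline u)).clm_apply (hasDerivAt_const u v)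
    simpa using this
  have D2 : ∀ u ∈ Set.Icc (0:ℝ) 1,
      HasFDerivAt (fderiv ℝ (fderiv ℝ F))
        (fderiv ℝ (fderiv ℝ (fderiv ℝ F)) (z + u • v)) (z + u • v) := by
    intro u hu
    exact ((((hcd u hu).fderiv_right (m := ((⊤:ℕ∞) : WithTop ℕ∞)) hletop).fderiv_right
      (m := ((⊤:ℕ∞) : WithTop ℕ∞)) hletop).differentiableAt hle1).hasFDerivAt
  have g2' : ∀ u ∈ Set.Icc (0:ℝ) 1,
      HasDerivAt (fun u : ℝ => fderiv ℝ (fderiv ℝ F) (z + u • v) v v)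
        (fderiv ℝ (fderiv ℝ (fderiv ℝ F)) (z + u • v) v v v) u := by
    intro u hu
    have h1 := ((D2 u hu).comp_hasDerivAt u (hline u)).clm_apply (hasDerivAt_const u v)
    have h2 := h1.clm_apply (hasDerivAt_const u v)
    simpa using h2
  have hg3 : ∀ u ∈ Set.Icc (0:ℝ) 1,
      ‖fderiv ℝ (fderiv ℝ (fderiv ℝ F)) (z + u • v) v v v‖ ≤ M * ‖v‖ ^ 3 := by
    intro u hu
    set A := fderiv ℝ (fderiv ℝ (fderiv ℝ F)) (z + u • v) with hA
    have hv : (0:ℝ) ≤ ‖v‖ := norm_nonneg v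
    calc ‖A v v v‖ ≤ ‖A v v‖ * ‖v‖ := ContinuousLinearMap.le_opNorm _ v
      _ ≤ (‖A v‖ * ‖v‖) * ‖v‖ :=
          mul_le_mul_of_nonneg_right (ContinuousLinearMap.le_opNorm _ v) hv
      _ ≤ ((‖A‖ * ‖v‖) * ‖v‖) * ‖v‖ := by
          gcongr
          exact ContinuousLinearMap.le_opNorm A v
      _ ≤ ((M * ‖v‖) * ‖v‖) * ‖v‖ := by
          gcongr
          rw [hA] at *
          exact hM u hu
      _ = M * ‖v‖ ^ 3 := by ring
  have hz0 : z + (0:ℝ) • v = z := by rw [zero_smul, add_zero]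
  have hA : ∀ u ∈ Set.Icc (0:ℝ) 1,
      |fderiv ℝ (fderiv ℝ F) (z + u • v) v v - fderiv ℝ (fderiv ℝ F) z v v|
        ≤ M * ‖v‖ ^ 3 := by
    intro u hu
    have H := Convex.norm_image_sub_le_of_norm_hasDerivWithin_le
      (fun x hx => (g2' x hx).hasDerivWithinAt) (fun x hx => hg3 x hx) hIcc h0m hu
    simp only [zero_smul, add_zero, sub_zero, Real.norm_eq_abs] at H
    have hu1 : |u| ≤ 1 := by
      rw [abs_le]; exact ⟨by linarith [hu.1], hu.2⟩
    calc |fderiv ℝ (fderiv ℝ F) (z + u • v) v v - fderiv ℝ (fderiv ℝ F) z v v|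
        ≤ M * ‖v‖ ^ 3 * |u| := H
      _ ≤ M * ‖v‖ ^ 3 := by nlinarith [abs_nonneg u]
  have hB : ∀ u ∈ Set.Icc (0:ℝ) 1,
      |fderiv ℝ F (z + u • v) v - fderiv ℝ F z v - u * (fderiv ℝ (fderiv ℝ F) z v v)|
        ≤ M * ‖v‖ ^ 3 := by
    intro u hu
    have hder : ∀ x ∈ Set.Icc (0:ℝ) 1,
        HasDerivWithinAt (fun u : ℝ => fderiv ℝ F (z + u • v) v - fderiv ℝ F z v
            - u * (fderiv ℝ (fderiv ℝ F) z v v))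
          (fderiv ℝ (fderiv ℝ F) (z + x • v) v v - fderiv ℝ (fderiv ℝ F) z v v)
          (Set.Icc (0:ℝ) 1) x := by
      intro x hx
      exact (((g1' x hx).sub_const _).sub (hasDerivAt_mul_const _)).hasDerivWithinAt
    have H := Convex.norm_image_sub_le_of_norm_hasDerivWithin_le hder
      (fun x hx => by simpa [Real.norm_eq_abs] using hA x hx) hIcc h0m hu
    simp only [zero_smul, add_zero, zero_mul, sub_zero, sub_self, Real.norm_eq_abs] at H
    have hu1 : |u| ≤ 1 := by
      rw [abs_le]; exact ⟨by linarith [hu.1], hu.2⟩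
    calc |fderiv ℝ F (z + u • v) v - fderiv ℝ F z v - u * (fderiv ℝ (fderiv ℝ F) z v v)|
        ≤ M * ‖v‖ ^ 3 * |u| := H
      _ ≤ M * ‖v‖ ^ 3 := by nlinarith [abs_nonneg u]
  have hder0 : ∀ x ∈ Set.Icc (0:ℝ) 1,
      HasDerivWithinAt (fun u : ℝ => F (z + u • v) - u * (fderiv ℝ F z v)
          - u ^ 2 / 2 * (fderiv ℝ (fderiv ℝ F) z v v))
        (fderiv ℝ F (z + x • v) v - fderiv ℝ F z v - x * (fderiv ℝ (fderiv ℝ F) z v v))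
        (Set.Icc (0:ℝ) 1) x := by
    intro x hx
    have hq : HasDerivAt (fun u : ℝ => u ^ 2 / 2 * (fderiv ℝ (fderiv ℝ F) z v v))
        (x * (fderiv ℝ (fderiv ℝ F) z v v)) x := by
      have := ((hasDerivAt_pow 2 x).div_const 2).mul_const (fderiv ℝ (fderiv ℝ F) z v v)
      exact this.congr_deriv (by norm_num)
    exact (((g0' x hx).sub (hasDerivAt_mul_const _)).sub hq).hasDerivWithinAt
  have habs : |F (z + v) - F z - fderiv ℝ F z v - 1 / 2 * fderiv ℝ (fderiv ℝ F) z v v|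
      = |F (z + v) - 1 * fderiv ℝ F z v - 1 ^ 2 / 2 * fderiv ℝ (fderiv ℝ F) z v v
          - (F z - 0 * fderiv ℝ F z v - 0 ^ 2 / 2 * fderiv ℝ (fderiv ℝ F) z v v)| := by
    ring_nf
  rw [habs]
  calc |F (z + v) - 1 * fderiv ℝ F z v - 1 ^ 2 / 2 * fderiv ℝ (fderiv ℝ F) z v v
          - (F z - 0 * fderiv ℝ F z v - 0 ^ 2 / 2 * fderiv ℝ (fderiv ℝ F) z v v)|
      ≤ M * ‖v‖ ^ 3 * |(1:ℝ) - 0| := by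
        have H := Convex.norm_image_sub_le_of_norm_hasDerivWithin_le hder0
          (fun x hx => by simpa [Real.norm_eq_abs] using hB x hx) hIcc h0m h1m
        simpa [Real.norm_eq_abs, one_smul, zero_smul] using H
    _ = M * ‖v‖ ^ 3 := by norm_num

lemma xi_open : IsOpen (Xi m) := by
  have hXi : Xi m = (⋂ i, {x : Fin m → ℝ | 0 < x i}) ∩ {x : Fin m → ℝ | ∑ i, x i < 1} := by
    ext x; simp [Xi, Set.mem_iInter]
  rw [hXi]
  exact (isOpen_iInter_of_finite fun i =>
    isOpen_lt continuous_const (continuous_apply i)).inter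
    (isOpen_lt (continuous_finset_sum _ fun i _ => continuous_apply i) continuous_const)

lemma coord_mem_xi {R : Fin (m+1) → ℝ} (hR : IsPosDist R) : coordOf R ∈ Xi m := by
  constructor
  · intro i; exact hR.1 _
  · have hsum : ∑ i : Fin m, R i.castSucc + R (Fin.last m) = 1 := by
      rw [← hR.2, Fin.sum_univ_castSucc]
    have := hR.1 (Fin.last m)
    simp only [coordOf]
    linarith

lemma last_eq {R : Fin (m+1) → ℝ} (hR : IsPosDist R) :
    R (Fin.last m) = 1 - ∑ i : Fin m, coordOf R i := by
  have hsum : ∑ i : Fin m, R i.castSucc + R (Fin.last m) = 1 := by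
    rw [← hR.2, Fin.sum_univ_castSucc]
  simp only [coordOf]
  linarith

lemma quadForm_sigma_eq (P : Fin (m+1) → ℝ) (v : Fin m → ℝ) :
    quadForm (SigmaMat P) v
      = (∑ i, v i ^ 2 / P i.castSucc) + (∑ i, v i) ^ 2 / P (Fin.last m) := by
  have inner : ∀ i : Fin m, (∑ j, (if i = j then 1 / P i.castSucc + 1 / P (Fin.last m)
      else 1 / P (Fin.last m)) * v j)
      = v i / P i.castSucc + (∑ j, v j) / P (Fin.last m) := by
    intro i
    have hterm : ∀ j : Fin m, (if i = j then 1 / P i.castSucc + 1 / P (Fin.last m)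
        else 1 / P (Fin.last m)) * v j
        = (if i = j then v j / P i.castSucc else 0) + v j / P (Fin.last m) := by
      intro j; split_ifs <;> ring
    rw [Finset.sum_congr rfl fun j _ => hterm j, Finset.sum_add_distrib,
      Finset.sum_ite_eq Finset.univ i (fun j => v j / P i.castSucc)]
    simp [Finset.sum_div]
  simp only [quadForm, dotProduct, Matrix.mulVec, SigmaMat, Matrix.of_apply]
  rw [Finset.sum_congr rfl fun i _ => by rw [inner i]]
  simp only [mul_add]
  rw [Finset.sum_add_distrib]
  congr 1
  · exact Finset.sum_congr rfl fun i _ => by ring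
  · rw [← Finset.sum_mul]
    ring

lemma quadForm_sigma_nonneg {P : Fin (m+1) → ℝ} (hP : IsPosDist P) (v : Fin m → ℝ) :
    0 ≤ quadForm (SigmaMat P) v := by
  rw [quadForm_sigma_eq]
  have h1 : 0 ≤ ∑ i, v i ^ 2 / P i.castSucc :=
    Finset.sum_nonneg fun i _ => div_nonneg (sq_nonneg _) (hP.1 _).le
  have h2 : 0 ≤ (∑ i, v i) ^ 2 / P (Fin.last m) := div_nonneg (sq_nonneg _) (hP.1 _).le
  linarith

lemma sum_sq_le_quadForm {P : Fin (m+1) → ℝ} (hP : IsPosDist P) (v : Fin m → ℝ) :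
    (∑ i, v i ^ 2) ≤ quadForm (SigmaMat P) v := by
  rw [quadForm_sigma_eq]
  have hle : ∀ i : Fin m, v i ^ 2 ≤ v i ^ 2 / P i.castSucc := by
    intro i
    have h1 : P i.castSucc ≤ 1 := by
      have := Finset.single_le_sum (f := P) (fun j _ => (hP.1 j).le)
        (Finset.mem_univ i.castSucc)
      rw [hP.2] at this; exact this
    rw [le_div_iff₀ (hP.1 _)]
    nlinarith [sq_nonneg (v i)]
  have hs := Finset.sum_le_sum fun i (_ : i ∈ Finset.univ) => hle i
  have h2 : 0 ≤ (∑ i, v i) ^ 2 / P (Fin.last m) := div_nonneg (sq_nonneg _) (hP.1 _).le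
  linarith

lemma quadForm_sub_le {P : Fin (m+1) → ℝ} (hP : IsPosDist P) (a b : Fin m → ℝ) :
    quadForm (SigmaMat P) (fun i => a i - b i)
      ≤ 2 * quadForm (SigmaMat P) a + 2 * quadForm (SigmaMat P) b := by
  rw [quadForm_sigma_eq, quadForm_sigma_eq, quadForm_sigma_eq]
  have h1 : ∀ i : Fin m, (a i - b i) ^ 2 / P i.castSucc
      ≤ 2 * (a i ^ 2 / P i.castSucc) + 2 * (b i ^ 2 / P i.castSucc) := by
    intro i
    have hsq : (a i - b i) ^ 2 ≤ 2 * a i ^ 2 + 2 * b i ^ 2 := by nlinarith [sq_nonneg (a i + b i)]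
    calc (a i - b i) ^ 2 / P i.castSucc ≤ (2 * a i ^ 2 + 2 * b i ^ 2) / P i.castSucc :=
        (div_le_div_iff_of_pos_right (hP.1 _)).mpr hsq
      _ = 2 * (a i ^ 2 / P i.castSucc) + 2 * (b i ^ 2 / P i.castSucc) := by ring
  have hsum1 := Finset.sum_le_sum fun i (_ : i ∈ Finset.univ) => h1 i
  have h2 : (∑ i, (a i - b i)) ^ 2 / P (Fin.last m)
      ≤ 2 * ((∑ i, a i) ^ 2 / P (Fin.last m)) + 2 * ((∑ i, b i) ^ 2 / P (Fin.last m)) := by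
    rw [Finset.sum_sub_distrib]
    have hsq : (∑ i, a i - ∑ i, b i) ^ 2 ≤ 2 * (∑ i, a i) ^ 2 + 2 * (∑ i, b i) ^ 2 := by
      nlinarith [sq_nonneg (∑ i, a i + ∑ i, b i)]
    calc (∑ i, a i - ∑ i, b i) ^ 2 / P (Fin.last m)
        ≤ (2 * (∑ i, a i) ^ 2 + 2 * (∑ i, b i) ^ 2) / P (Fin.last m) :=
        (div_le_div_iff_of_pos_right (hP.1 _)).mpr hsq
      _ = 2 * ((∑ i, a i) ^ 2 / P (Fin.last m)) + 2 * ((∑ i, b i) ^ 2 / P (Fin.last m)) := by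
        ring
  simp only [Finset.sum_add_distrib, ← Finset.mul_sum] at hsum1
  linarith [hsum1, h2]

lemma quadForm_sigma_close {P Q : Fin (m+1) → ℝ} {pm δ : ℝ} (hpm : 0 < pm)
    (hP : ∀ i, 0 < P i) (hPm : ∀ i, pm ≤ P i) (hQc : ∀ i, |Q i - P i| ≤ δ) (hδ : δ ≤ pm / 2)
    (v : Fin m → ℝ) :
    quadForm (SigmaMat Q) v
      ≤ quadForm (SigmaMat P) v + 2 * δ / pm ^ 2 * (1 + m) * (∑ i, v i ^ 2) := by
  have hδ0 : 0 ≤ δ := le_trans (abs_nonneg _) (hQc 0)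
  have hQpos : ∀ i, pm / 2 ≤ Q i := by
    intro i
    have h := hQc i; rw [abs_le] at h
    have := hPm i
    linarith [h.1]
  have key : ∀ i, 1 / Q i ≤ 1 / P i + 2 * δ / pm ^ 2 := by
    intro i
    have hq : 0 < Q i := lt_of_lt_of_le (by linarith) (hQpos i)
    have hp := hP i
    have e1 : 1 / Q i = 1 / P i + (P i - Q i) / (Q i * P i) := by
      field_simp
      ring
    rw [e1]
    have hPQ : pm ^ 2 / 2 ≤ Q i * P i := by nlinarith [hQpos i, hPm i]
    have hnum : P i - Q i ≤ δ := by have h := hQc i; rw [abs_le] at h; linarith [h.1]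
    have h2 : (P i - Q i) / (Q i * P i) ≤ δ / (Q i * P i) := by
      gcongr
    have h3 : δ / (Q i * P i) ≤ δ / (pm ^ 2 / 2) := by
      have hb : (0:ℝ) < pm ^ 2 / 2 := by positivity
      gcongr

    have h4 : δ / (pm ^ 2 / 2) = 2 * δ / pm ^ 2 := by
      rw [div_div_eq_mul_div, mul_comm]
    linarith
  rw [quadForm_sigma_eq, quadForm_sigma_eq]
  have t1 : ∀ i : Fin m, v i ^ 2 / Q i.castSucc
      ≤ v i ^ 2 / P i.castSucc + v i ^ 2 * (2 * δ / pm ^ 2) := by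
    intro i
    have := key i.castSucc
    have h := mul_le_mul_of_nonneg_left this (sq_nonneg (v i))
    calc v i ^ 2 / Q i.castSucc = v i ^ 2 * (1 / Q i.castSucc) := by ring
      _ ≤ v i ^ 2 * (1 / P i.castSucc + 2 * δ / pm ^ 2) := h
      _ = v i ^ 2 / P i.castSucc + v i ^ 2 * (2 * δ / pm ^ 2) := by ring
  have hsum1 := Finset.sum_le_sum fun i (_ : i ∈ Finset.univ) => t1 i
  rw [Finset.sum_add_distrib] at hsum1
  have t2 : (∑ i, v i) ^ 2 / Q (Fin.last m)
      ≤ (∑ i, v i) ^ 2 / P (Fin.last m) + (∑ i, v i) ^ 2 * (2 * δ / pm ^ 2) := by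
    have := key (Fin.last m)
    have h := mul_le_mul_of_nonneg_left this (sq_nonneg (∑ i, v i))
    calc (∑ i, v i) ^ 2 / Q (Fin.last m) = (∑ i, v i) ^ 2 * (1 / Q (Fin.last m)) := by ring
      _ ≤ (∑ i, v i) ^ 2 * (1 / P (Fin.last m) + 2 * δ / pm ^ 2) := h
      _ = (∑ i, v i) ^ 2 / P (Fin.last m) + (∑ i, v i) ^ 2 * (2 * δ / pm ^ 2) := by ring
  have hcs : (∑ i, v i) ^ 2 ≤ (m : ℝ) * ∑ i, v i ^ 2 := by
    have := sq_sum_le_card_mul_sum_sq (s := (Finset.univ : Finset (Fin m))) (f := v)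
    simpa using this
  have hfac : 0 ≤ 2 * δ / pm ^ 2 := by positivity
  rw [← Finset.sum_mul] at hsum1
  nlinarith [hsum1, t2, mul_le_mul_of_nonneg_right hcs hfac]

lemma pstar_posdist {P₁ P₂ : Fin (m+1) → ℝ} (h₁ : IsPosDist P₁) (h₂ : IsPosDist P₂) :
    IsPosDist (Pstar P₁ P₂) := by
  have hS : 0 < ∑ j, Real.sqrt (P₁ j * P₂ j) :=
    Finset.sum_pos (fun j _ => Real.sqrt_pos.mpr (mul_pos (h₁.1 j) (h₂.1 j)))
      ⟨0, Finset.mem_univ 0⟩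
  constructor
  · intro i
    exact div_pos (Real.sqrt_pos.mpr (mul_pos (h₁.1 i) (h₂.1 i))) hS
  · simp only [Pstar]
    rw [← Finset.sum_div, div_self hS.ne']

lemma norm_sq_le_sum_sq (v : Fin m → ℝ) : ‖v‖ ^ 2 ≤ ∑ i, v i ^ 2 := by
  have hnn : (0:ℝ) ≤ Real.sqrt (∑ i, v i ^ 2) := Real.sqrt_nonneg _
  have hb : ‖v‖ ≤ Real.sqrt (∑ i, v i ^ 2) := by
    rw [pi_norm_le_iff_of_nonneg hnn]
    intro i
    rw [Real.norm_eq_abs, ← Real.sqrt_sq_eq_abs]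
    exact Real.sqrt_le_sqrt
      (Finset.single_le_sum (fun j _ => sq_nonneg (v j)) (Finset.mem_univ i))
  have h2 : ‖v‖ ^ 2 ≤ (Real.sqrt (∑ i, v i ^ 2)) ^ 2 := by nlinarith [norm_nonneg v]
  rwa [Real.sq_sqrt (Finset.sum_nonneg fun i _ => sq_nonneg (v i))] at h2

lemma sum_sq_le_card_norm (v : Fin m → ℝ) : ∑ i, v i ^ 2 ≤ (m : ℝ) * ‖v‖ ^ 2 := by
  have h : ∀ i : Fin m, v i ^ 2 ≤ ‖v‖ ^ 2 := by
    intro i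
    have := norm_le_pi_norm v i
    have h2 : |v i| ≤ ‖v‖ := by simpa [Real.norm_eq_abs] using this
    nlinarith [abs_nonneg (v i), norm_nonneg v, sq_abs (v i)]
  calc ∑ i, v i ^ 2 ≤ ∑ _i : Fin m, ‖v‖ ^ 2 := Finset.sum_le_sum fun i _ => h i
    _ = (m : ℝ) * ‖v‖ ^ 2 := by
      simp [Finset.sum_const, Finset.card_univ, nsmul_eq_mul]

lemma f_diag_zero (D : Divergence m) {r : Fin m → ℝ} (hr : r ∈ Xi m) : D.f r r = 0 :=
  (D.eq_zero_iff r hr r hr).mpr rfl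

lemma fderiv_diag_zero (D : Divergence m) {r : Fin m → ℝ} (hr : r ∈ Xi m) :
    fderiv ℝ (fun p : (Fin m → ℝ) × (Fin m → ℝ) => D.f p.1 p.2) (r, r) = 0 := by
  have hU : IsOpen ((Xi m) ×ˢ (Xi m)) := xi_open.prod xi_open
  have hrr : ((r, r) : (Fin m → ℝ) × (Fin m → ℝ)) ∈ (Xi m) ×ˢ (Xi m) := ⟨hr, hr⟩
  have hmin : IsLocalMin (fun p : (Fin m → ℝ) × (Fin m → ℝ) => D.f p.1 p.2) (r, r) := by
    apply Filter.eventually_of_mem (hU.mem_nhds hrr)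
    intro x hx
    show D.f r r ≤ D.f x.1 x.2
    rw [f_diag_zero D hr]
    exact D.nonneg x.1 hx.1 x.2 hx.2
  exact hmin.fderiv_eq_zero

lemma fderiv2_single (D : Divergence m) {r : Fin m → ℝ} (hr : r ∈ Xi m) (i j : Fin m) :
    fderiv ℝ (fderiv ℝ (fun p : (Fin m → ℝ) × (Fin m → ℝ) => D.f p.1 p.2)) (r, r)
      (Pi.single i 1, 0) (Pi.single j 1, 0) = 2 * Amat D r i j := by
  classical
  set F := fun p : (Fin m → ℝ) × (Fin m → ℝ) => D.f p.1 p.2 with hF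
  have hU : IsOpen ((Xi m) ×ˢ (Xi m)) := xi_open.prod xi_open
  have hle1 : ((⊤ : ℕ∞) : WithTop ℕ∞) ≠ 0 := by simp
  have hletop : ((⊤:ℕ∞) : WithTop ℕ∞) + 1 ≤ ((⊤ : ℕ∞) : WithTop ℕ∞) := by
    exact_mod_cast le_top
  have hcd : ∀ x ∈ (Xi m) ×ˢ (Xi m), ContDiffAt ℝ (⊤ : ℕ∞) F x :=
    fun x hx => D.smooth.contDiffAt (hU.mem_nhds hx)
  set J : (Fin m → ℝ) →L[ℝ] (Fin m → ℝ) × (Fin m → ℝ) :=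
    (ContinuousLinearMap.id ℝ (Fin m → ℝ)).prod 0 with hJdef
  have hJ : ∀ s : Fin m → ℝ,
      HasFDerivAt (fun s' : Fin m → ℝ => ((s', r) : (Fin m → ℝ) × (Fin m → ℝ))) J s :=
    fun s => (hasFDerivAt_id s).prodMk (hasFDerivAt_const r s)
  have hinner : ∀ s ∈ Xi m,
      fderiv ℝ (fun s' => D.f s' r) s (Pi.single j 1)
        = fderiv ℝ F (s, r) (Pi.single j 1, 0) := by
    intro s hs
    have hdiff : DifferentiableAt ℝ F (s, r) := (hcd (s, r) ⟨hs, hr⟩).differentiableAt hle1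
    have hcomp : HasFDerivAt (fun s' : Fin m → ℝ => D.f s' r)
        ((fderiv ℝ F (s, r)).comp J) s := HasFDerivAt.comp s
          (f := fun s' : Fin m → ℝ => ((s', r) : (Fin m → ℝ) × (Fin m → ℝ)))
          hdiff.hasFDerivAt (hJ s)
    rw [hcomp.fderiv]
    simp [hJdef]
  have hev : (fun s => fderiv ℝ (fun s' => D.f s' r) s (Pi.single j 1))
      =ᶠ[nhds r] (fun s => fderiv ℝ F (s, r) (Pi.single j 1, 0)) :=
    Filter.eventuallyEq_of_mem (xi_open.mem_nhds hr) hinner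
  have hD1 : HasFDerivAt (fderiv ℝ F) (fderiv ℝ (fderiv ℝ F) (r, r)) (r, r) :=
    (((hcd (r, r) ⟨hr, hr⟩).fderiv_right (m := ((⊤:ℕ∞) : WithTop ℕ∞))
      hletop).differentiableAt hle1).hasFDerivAt
  have h3 : HasFDerivAt ((fderiv ℝ F) ∘ (fun s' : Fin m → ℝ =>
      ((s', r) : (Fin m → ℝ) × (Fin m → ℝ))))
      ((fderiv ℝ (fderiv ℝ F) (r, r)).comp J) r :=
    HasFDerivAt.comp (x := r)
      (f := fun s' : Fin m → ℝ => ((s', r) : (Fin m → ℝ) × (Fin m → ℝ))) hD1 (hJ r)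
  have h3' : HasFDerivAt (fun s : Fin m → ℝ => fderiv ℝ F (s, r))
      ((fderiv ℝ (fderiv ℝ F) (r, r)).comp J) r := h3
  have h4 := h3'.clm_apply
    (hasFDerivAt_const ((Pi.single j 1 : Fin m → ℝ), (0 : Fin m → ℝ)) r)
  have h4' : HasFDerivAt (fun s => fderiv ℝ F (s, r) (Pi.single j 1, 0)) _ r := h4
  have h5 : fderiv ℝ (fun s => fderiv ℝ (fun s' => D.f s' r) s (Pi.single j 1)) r
      = fderiv ℝ (fun s => fderiv ℝ F (s, r) (Pi.single j 1, 0)) r := hev.fderiv_eq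
  simp only [Amat, Matrix.of_apply]
  rw [h5, h4'.fderiv]
  simp [hJdef]

lemma clm2_expand (B : ((Fin m → ℝ) × (Fin m → ℝ)) →L[ℝ] ((Fin m → ℝ) × (Fin m → ℝ)) →L[ℝ] ℝ)
    (e : Fin m → ℝ) :
    B (e, 0) (e, 0) = ∑ i, ∑ j, e i * e j * B (Pi.single i 1, 0) (Pi.single j 1, 0) := by
  classical
  have he : ((e, (0 : Fin m → ℝ)) : (Fin m → ℝ) × (Fin m → ℝ))
      = ∑ i, e i • (((Pi.single i 1 : Fin m → ℝ), (0 : Fin m → ℝ))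
          : (Fin m → ℝ) × (Fin m → ℝ)) := by
    apply Prod.ext
    · rw [Prod.fst_sum]
      funext k
      simp [Finset.sum_apply, Pi.single_apply]
    · rw [Prod.snd_sum]
      simp
  rw [he]
  have step1 : B (∑ i, e i • (((Pi.single i 1 : Fin m → ℝ), (0 : Fin m → ℝ))
      : (Fin m → ℝ) × (Fin m → ℝ)))
      = ∑ i, e i • B ((Pi.single i 1 : Fin m → ℝ), (0 : Fin m → ℝ)) := by
    rw [map_sum]
    exact Finset.sum_congr rfl fun i _ => by rw [_root_.map_smul]
  rw [step1, ContinuousLinearMap.sum_apply]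
  refine Finset.sum_congr rfl fun i _ => ?_
  rw [ContinuousLinearMap.smul_apply, map_sum, Finset.smul_sum]
  refine Finset.sum_congr rfl fun j _ => ?_
  rw [_root_.map_smul]
  simp only [smul_eq_mul]
  ring

lemma quadForm_double (M : Matrix (Fin m) (Fin m) ℝ) (v : Fin m → ℝ) :
    quadForm M v = ∑ i, ∑ j, v i * v j * M i j := by
  simp only [quadForm, dotProduct, Matrix.mulVec, Finset.mul_sum]
  exact Finset.sum_congr rfl fun i _ => Finset.sum_congr rfl fun j _ => by ring

end Helpers


set_option maxHeartbeats 2000000 in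
/-- (Lemma on the converse side.) For an invariant divergence `D`
with constant `η > 0`, `P₁ ≠ P₂` with normalized geometric mean `P*`, and thresholds
`r_n = Θ(1/n)`, eventually `A_{Σ_{𝐏*}}(r_n/(2η) − M₃/n^{3/2}) ⊆ {(T,R) : D(T‖R) < r_n}`. -/
theorem ball_subset_div {m : ℕ} (hm : 1 ≤ m)
    (D : Divergence m) (η : ℝ) (hη : 0 < η) (hinv : IsInvariant D η)
    (P₁ P₂ : Fin (m+1) → ℝ) (h₁ : IsPosDist P₁) (h₂ : IsPosDist P₂) (hne : P₁ ≠ P₂)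
    (rseq : ℕ → ℝ) (hrpos : ∀ n, 0 < rseq n)
    (hΘ : ∃ c₁ > (0:ℝ), ∃ c₂ > (0:ℝ), ∃ N : ℕ, ∀ n ≥ N,
      c₁ / n ≤ rseq n ∧ rseq n ≤ c₂ / n) :
    ∃ M₃ > (0:ℝ), ∃ N₃ : ℕ, ∀ n ≥ N₃, ∀ T R : Fin (m+1) → ℝ,
      memASigma (Pstar P₁ P₂) T R (rseq n / (2 * η) - M₃ / (n : ℝ) ^ ((3:ℝ)/2)) →
      Dapp D T R < rseq n := by
  classical
  obtain ⟨c₁, hc₁, c₂, hc₂, N, hN⟩ := hΘ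
  have hPs : IsPosDist (Pstar P₁ P₂) := pstar_posdist h₁ h₂
  set Ps := Pstar P₁ P₂ with hPsdef
  set p : Fin m → ℝ := coordOf Ps with hpdef
  have hp : p ∈ Xi m := coord_mem_xi hPs
  set G := fun q : (Fin m → ℝ) × (Fin m → ℝ) => D.f q.1 q.2 with hGdef
  have hU : IsOpen ((Xi m) ×ˢ (Xi m)) := xi_open.prod xi_open
  have hzp : ((p, p) : (Fin m → ℝ) × (Fin m → ℝ)) ∈ (Xi m) ×ˢ (Xi m) := ⟨hp, hp⟩
  obtain ⟨ε', hε', hball⟩ := Metric.isOpen_iff.mp hU (p, p) hzp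
  set ε := ε' / 3 with hεdef
  have hεpos : 0 < ε := by positivity
  have hKU : Metric.closedBall ((p, p) : (Fin m → ℝ) × (Fin m → ℝ)) (2 * ε)
      ⊆ (Xi m) ×ˢ (Xi m) := by
    refine subset_trans (Metric.closedBall_subset_ball ?_) hball
    rw [hεdef]; linarith
  have hle1 : ((⊤ : ℕ∞) : WithTop ℕ∞) ≠ 0 := by simp
  have hletop : ((⊤:ℕ∞) : WithTop ℕ∞) + 1 ≤ ((⊤ : ℕ∞) : WithTop ℕ∞) := by
    exact_mod_cast le_top
  have hG3cont : ContinuousOn (fderiv ℝ (fderiv ℝ (fderiv ℝ G)))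
      (Metric.closedBall ((p, p) : (Fin m → ℝ) × (Fin m → ℝ)) (2 * ε)) := by
    intro x hx
    have hcd : ContDiffAt ℝ (⊤ : ℕ∞) G x := D.smooth.contDiffAt (hU.mem_nhds (hKU hx))
    exact (((hcd.fderiv_right (m := ((⊤:ℕ∞) : WithTop ℕ∞)) hletop).fderiv_right
      (m := ((⊤:ℕ∞) : WithTop ℕ∞)) hletop).fderiv_right (m := ((⊤:ℕ∞) : WithTop ℕ∞))
      hletop).continuousAt.continuousWithinAt
  obtain ⟨M0, hM0⟩ := (isCompact_closedBall ((p, p) : (Fin m → ℝ) × (Fin m → ℝ))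
    (2 * ε)).exists_bound_of_continuousOn (E := (Fin m → ℝ) × (Fin m → ℝ) →L[ℝ]
      (Fin m → ℝ) × (Fin m → ℝ) →L[ℝ] (Fin m → ℝ) × (Fin m → ℝ) →L[ℝ] ℝ) hG3cont
  set M' := max M0 0 with hM'def
  have hM'0 : 0 ≤ M' := le_max_right _ _
  obtain ⟨i₀, _, hi₀⟩ := Finset.exists_min_image Finset.univ Ps ⟨0, Finset.mem_univ 0⟩
  set pm := Ps i₀ with hpmdef
  have hpm : 0 < pm := hPs.1 i₀
  have hpmle : ∀ i, pm ≤ Ps i := fun i => hi₀ i (Finset.mem_univ i)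
  set K0 := Real.sqrt (c₂ / (2 * η)) with hK0def
  have hK0 : 0 ≤ K0 := Real.sqrt_nonneg _
  have hK0sq : K0 ^ 2 = c₂ / (2 * η) := Real.sq_sqrt (by positivity)
  have hmR : (0:ℝ) < (m:ℝ) := by exact_mod_cast hm
  set τ := min (ε / 2) (pm / (2 * (m:ℝ))) with hτdef
  have hτ : 0 < τ := lt_min (by positivity) (by positivity)
  set Cb := 8 * η * (1 + (m:ℝ)) * (m:ℝ) ^ 2 * K0 ^ 3 / pm ^ 2 with hCbdef
  have hCb : 0 ≤ Cb := by positivity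
  set Cerr := 8 * M' * K0 ^ 3 + Cb with hCerrdef
  have hCerr : 0 ≤ Cerr := by positivity
  refine ⟨(Cerr + 1) / (2 * η), by positivity, max N (⌈(K0 / τ) ^ 2⌉₊ + 1), ?_⟩
  intro n hn T R hmem
  have hnN : N ≤ n := le_trans (le_max_left _ _) hn
  have hn1 : 1 ≤ n := le_trans (le_trans (Nat.le_add_left 1 _) (le_max_right N _)) hn
  have hnR : (0:ℝ) < n := by exact_mod_cast hn1
  obtain ⟨hrl, hru⟩ := hN n hnN
  obtain ⟨hT, hR, hq⟩ := hmem
  set t := coordOf T with htdef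
  set r := coordOf R with hrdef
  have htXi : t ∈ Xi m := coord_mem_xi hT
  have hrXi : r ∈ Xi m := coord_mem_xi hR
  set a := fun i => t i - p i with hadef
  set b := fun i => r i - p i with hbdef
  set e := fun i => t i - r i with hedef
  set np := (n:ℝ) ^ ((3:ℝ)/2) with hnpdef
  have hsqn : Real.sqrt n * Real.sqrt n = (n:ℝ) := Real.mul_self_sqrt hnR.le
  have hsn : 0 < Real.sqrt n := Real.sqrt_pos.mpr hnR
  have hnp : np = n * Real.sqrt n := by
    rw [hnpdef, show (3:ℝ)/2 = 1 + 1/2 by norm_num, Real.rpow_add hnR, Real.rpow_one,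
      ← Real.sqrt_eq_rpow]
  have hnppos : 0 < np := by rw [hnp]; positivity
  set M₃ := (Cerr + 1) / (2 * η) with hM₃def
  -- quadratic form bounds
  have hqa0 : 0 ≤ quadForm (SigmaMat Ps) a := quadForm_sigma_nonneg hPs a
  have hqb0 : 0 ≤ quadForm (SigmaMat Ps) b := quadForm_sigma_nonneg hPs b
  have hM₃nn : 0 ≤ M₃ / np := by positivity
  have hρle : rseq n / (2 * η) - M₃ / np ≤ c₂ / (2 * η * n) := by
    have h1 : rseq n / (2 * η) ≤ (c₂ / n) / (2 * η) :=
      (div_le_div_iff_of_pos_right (by positivity)).mpr hru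
    have h2 : (c₂ / n) / (2 * η) = c₂ / (2 * η * n) := by
      rw [div_div, mul_comm (n:ℝ) (2 * η)]
    linarith
  have haq : ‖a‖ ^ 2 ≤ c₂ / (2 * η * n) := by
    have h1 := norm_sq_le_sum_sq a
    have h2 := sum_sq_le_quadForm hPs a
    linarith
  have hbq : ‖b‖ ^ 2 ≤ c₂ / (2 * η * n) := by
    have h1 := norm_sq_le_sum_sq b
    have h2 := sum_sq_le_quadForm hPs b
    linarith
  have hKn2 : (K0 / Real.sqrt n) ^ 2 = c₂ / (2 * η * n) := by
    rw [div_pow, Real.sq_sqrt hnR.le, hK0sq, div_div]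
  have hsqle : ∀ x y : ℝ, 0 ≤ x → 0 ≤ y → x ^ 2 ≤ y ^ 2 → x ≤ y :=
    fun x y _ hy h => (pow_le_pow_iff_left₀ (by assumption) hy two_ne_zero).mp h
  have hna : ‖a‖ ≤ K0 / Real.sqrt n := by
    refine hsqle _ _ (norm_nonneg a) (by positivity) ?_
    rw [hKn2]; exact haq
  have hnb : ‖b‖ ≤ K0 / Real.sqrt n := by
    refine hsqle _ _ (norm_nonneg b) (by positivity) ?_
    rw [hKn2]; exact hbq
  have hKτ : K0 / Real.sqrt n ≤ τ := by
    have hceil : ((⌈(K0 / τ) ^ 2⌉₊ + 1 : ℕ) : ℝ) ≤ (n : ℝ) := by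
      exact_mod_cast le_trans (le_max_right N _) hn
    have hle : (K0 / τ) ^ 2 ≤ (n : ℝ) := by
      have := Nat.le_ceil ((K0 / τ) ^ 2)
      have hc : ((⌈(K0 / τ) ^ 2⌉₊ : ℕ) : ℝ) ≤ (n : ℝ) - 1 := by
        push_cast at hceil ⊢; linarith
      linarith
    refine hsqle _ _ (by positivity) hτ.le ?_
    rw [div_pow, Real.sq_sqrt hnR.le]
    rw [div_pow] at hle
    rw [div_le_iff₀ hnR]
    calc K0 ^ 2 = K0 ^ 2 / τ ^ 2 * τ ^ 2 := by field_simp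
      _ ≤ (n : ℝ) * τ ^ 2 := by
          have hτ2 : (0:ℝ) ≤ τ ^ 2 := by positivity
          exact mul_le_mul_of_nonneg_right hle hτ2
      _ = τ ^ 2 * (n : ℝ) := by ring
  have hta : ‖a‖ ≤ τ := le_trans hna hKτ
  have htb : ‖b‖ ≤ τ := le_trans hnb hKτ
  have heab : e = fun i => a i - b i := by
    funext k
    show t k - r k = (t k - p k) - (r k - p k)
    ring
  have hesub : e = a - b := by
    funext k
    show t k - r k = a k - b k
    show t k - r k = (t k - p k) - (r k - p k)
    ring
  have hne : ‖e‖ ≤ ‖a‖ + ‖b‖ := by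
    rw [hesub]; exact norm_sub_le a b
  have hneK : ‖e‖ ≤ 2 * (K0 / Real.sqrt n) := by linarith
  have hneτ : ‖e‖ ≤ 2 * τ := by linarith
  -- segment membership
  have hmemball : ∀ u ∈ Set.Icc (0:ℝ) 1,
      ((r, r) : (Fin m → ℝ) × (Fin m → ℝ)) + u • ((e, 0) : (Fin m → ℝ) × (Fin m → ℝ))
        ∈ Metric.closedBall ((p, p) : (Fin m → ℝ) × (Fin m → ℝ)) (2 * ε) := by
    intro u hu
    rw [Metric.mem_closedBall, dist_eq_norm]
    have hdiff : ((r, r) : (Fin m → ℝ) × (Fin m → ℝ)) + u • ((e, 0) : (Fin m → ℝ) × (Fin m → ℝ))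
        - (p, p) = (b + u • e, b) := by
      apply Prod.ext
      · show r + u • e - p = b + u • e
        funext k
        simp only [Pi.add_apply, Pi.sub_apply, Pi.smul_apply, smul_eq_mul]
        show r k + u * e k - p k = (r k - p k) + u * e k
        ring
      · show r + u • (0 : Fin m → ℝ) - p = b
        funext k
        simp only [Pi.add_apply, Pi.sub_apply, Pi.smul_apply, smul_eq_mul]
        show r k + u * 0 - p k = r k - p k
        ring
    rw [hdiff, Prod.norm_def]
    have hu1 : |u| ≤ 1 := by rw [abs_le]; exact ⟨by linarith [hu.1], hu.2⟩
    have h1 : ‖b + u • e‖ ≤ ‖b‖ + |u| * ‖e‖ := by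
      calc ‖b + u • e‖ ≤ ‖b‖ + ‖u • e‖ := norm_add_le _ _
        _ = ‖b‖ + |u| * ‖e‖ := by rw [norm_smul, Real.norm_eq_abs]
    have hττ : τ ≤ ε / 2 := min_le_left _ _
    have h2 : ‖b + u • e‖ ≤ 2 * ε := by
      have : |u| * ‖e‖ ≤ 1 * (2 * τ) :=
        mul_le_mul hu1 hneτ (norm_nonneg e) zero_le_one
      linarith
    have h3 : ‖b‖ ≤ 2 * ε := by linarith
    exact max_le h2 h3
  have hseg : ∀ u ∈ Set.Icc (0:ℝ) 1,
      ((r, r) : (Fin m → ℝ) × (Fin m → ℝ)) + u • ((e, 0) : (Fin m → ℝ) × (Fin m → ℝ))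
        ∈ (Xi m) ×ˢ (Xi m) := fun u hu => hKU (hmemball u hu)
  have hMseg : ∀ u ∈ Set.Icc (0:ℝ) 1,
      ‖fderiv ℝ (fderiv ℝ (fderiv ℝ G))
        (((r, r) : (Fin m → ℝ) × (Fin m → ℝ)) + u • ((e, 0) : (Fin m → ℝ) × (Fin m → ℝ)))‖
        ≤ M' :=
    fun u hu => le_trans (hM0 _ (hmemball u hu)) (le_max_left _ _)
  have htay := taylor2_bound (F := G) hU D.smooth hseg hMseg
  -- identify the pieces
  have hz1 : ((r, r) : (Fin m → ℝ) × (Fin m → ℝ)) + ((e, 0) : (Fin m → ℝ) × (Fin m → ℝ))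
      = (t, r) := by
    apply Prod.ext
    · show r + e = t
      funext k
      show r k + (t k - r k) = t k
      ring
    · show r + 0 = r
      simp
  have hAm : ∀ i j, Amat D r i j = η * SigmaMat R i j := by
    intro i j
    have h := hinv R hR
    have h2 : Amat D r = η • SigmaMat R := h
    rw [h2, Matrix.smul_apply, smul_eq_mul]
  have hhess : fderiv ℝ (fderiv ℝ G) (r, r) (e, 0) (e, 0)
      = 2 * η * quadForm (SigmaMat R) e := by
    rw [clm2_expand, quadForm_double, Finset.mul_sum]
    refine Finset.sum_congr rfl fun i _ => ?_
    rw [Finset.mul_sum]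
    refine Finset.sum_congr rfl fun j _ => ?_
    rw [fderiv2_single D hrXi i j, hAm i j]
    ring
  have hnorm_e0 : ‖((e, 0) : (Fin m → ℝ) × (Fin m → ℝ))‖ = ‖e‖ := by
    rw [Prod.norm_def]
    simp [norm_nonneg]
  have htay2 : |Dapp D T R - η * quadForm (SigmaMat R) e| ≤ M' * ‖e‖ ^ 3 := by
    have h0 : G ((t, r) : (Fin m → ℝ) × (Fin m → ℝ)) = Dapp D T R := rfl
    have h1 : G ((r, r) : (Fin m → ℝ) × (Fin m → ℝ)) = 0 := f_diag_zero D hrXi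
    have h2 : fderiv ℝ G ((r, r) : (Fin m → ℝ) × (Fin m → ℝ))
        ((e, 0) : (Fin m → ℝ) × (Fin m → ℝ)) = 0 := by
      rw [fderiv_diag_zero D hrXi]
      rfl
    rw [hz1, h0, h1, h2, hhess, hnorm_e0] at htay
    calc |Dapp D T R - η * quadForm (SigmaMat R) e|
        = |Dapp D T R - 0 - 0 - 1 / 2 * (2 * η * quadForm (SigmaMat R) e)| := by
          congr 1; ring
      _ ≤ M' * ‖e‖ ^ 3 := htay
  -- closeness of R to Ps
  have hRc : ∀ i, |R i - Ps i| ≤ (m:ℝ) * ‖b‖ := by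
    intro i
    have hb_le : ∀ k : Fin m, |r k - p k| ≤ ‖b‖ := by
      intro k
      have := norm_le_pi_norm b k
      simpa [Real.norm_eq_abs, hbdef] using this
    have hm1 : (1:ℝ) ≤ (m:ℝ) := by exact_mod_cast hm
    induction i using Fin.lastCases with
    | last =>
        have hRl : R (Fin.last m) = 1 - ∑ k, r k := by
          rw [last_eq hR]
        have hPl : Ps (Fin.last m) = 1 - ∑ k, p k := by
          rw [last_eq hPs]
        rw [hRl, hPl]
        have heq : (1 - ∑ k, r k) - (1 - ∑ k, p k) = ∑ k, (p k - r k) := by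
          rw [Finset.sum_sub_distrib]; ring
        rw [heq]
        calc |∑ k, (p k - r k)| ≤ ∑ k, |p k - r k| := Finset.abs_sum_le_sum_abs _ _
          _ ≤ ∑ _k : Fin m, ‖b‖ := Finset.sum_le_sum fun k _ => by
              rw [abs_sub_comm]; exact hb_le k
          _ = (m:ℝ) * ‖b‖ := by
              simp [Finset.sum_const, Finset.card_univ, nsmul_eq_mul]
    | cast k =>
        have h1 : |R k.castSucc - Ps k.castSucc| = |r k - p k| := rfl
        rw [h1]
        have h2 : ‖b‖ ≤ (m:ℝ) * ‖b‖ := le_mul_of_one_le_left (norm_nonneg b) hm1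
        exact le_trans (hb_le k) h2
  have hδle : (m:ℝ) * ‖b‖ ≤ pm / 2 := by
    have hτle : τ ≤ pm / (2 * (m:ℝ)) := min_le_right _ _
    have : (m:ℝ) * ‖b‖ ≤ (m:ℝ) * (pm / (2 * (m:ℝ))) := by
      apply mul_le_mul_of_nonneg_left (le_trans htb hτle) hmR.le
    calc (m:ℝ) * ‖b‖ ≤ (m:ℝ) * (pm / (2 * (m:ℝ))) := this
      _ = pm / 2 := by
          field_simp
  have hswap := quadForm_sigma_close (Q := R) hpm hPs.1 hpmle hRc hδle e
  have hsub : quadForm (SigmaMat Ps) e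
      ≤ 2 * quadForm (SigmaMat Ps) a + 2 * quadForm (SigmaMat Ps) b := by
    rw [heab]
    exact quadForm_sub_le hPs a b
  -- numeric error bounds
  have hSe : ∑ i, e i ^ 2 ≤ (m:ℝ) * ‖e‖ ^ 2 := sum_sq_le_card_norm e
  have hSe0 : 0 ≤ ∑ i, e i ^ 2 := Finset.sum_nonneg fun i _ => sq_nonneg _
  have hne2 : ‖e‖ ^ 2 ≤ 4 * K0 ^ 2 / n := by
    have h1 : ‖e‖ ^ 2 ≤ (2 * (K0 / Real.sqrt n)) ^ 2 :=
      pow_le_pow_left₀ (norm_nonneg e) hneK 2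
    have h2 : (2 * (K0 / Real.sqrt n)) ^ 2 = 4 * K0 ^ 2 / n := by
      rw [mul_pow, div_pow, Real.sq_sqrt hnR.le]
      ring
    linarith
  have hSe' : ∑ i, e i ^ 2 ≤ (m:ℝ) * (4 * K0 ^ 2 / n) := by
    have := mul_le_mul_of_nonneg_left hne2 hmR.le
    linarith
  have hs3 : Real.sqrt n ^ 3 = np := by
    rw [hnp, pow_succ, Real.sq_sqrt hnR.le]
  have hE1 : M' * ‖e‖ ^ 3 ≤ 8 * M' * K0 ^ 3 / np := by
    have h1 : ‖e‖ ^ 3 ≤ (2 * (K0 / Real.sqrt n)) ^ 3 :=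
      pow_le_pow_left₀ (norm_nonneg e) hneK 3
    have h2 : (2 * (K0 / Real.sqrt n)) ^ 3 = 8 * K0 ^ 3 / np := by
      rw [mul_pow, div_pow, ← hs3]
      ring
    calc M' * ‖e‖ ^ 3 ≤ M' * (8 * K0 ^ 3 / np) := by
          rw [← h2]; exact mul_le_mul_of_nonneg_left h1 hM'0
      _ = 8 * M' * K0 ^ 3 / np := by ring
  have hE2 : η * (2 * ((m:ℝ) * ‖b‖) / pm ^ 2 * (1 + (m:ℝ)) * (∑ i, e i ^ 2)) ≤ Cb / np := by
    have hprod : ‖b‖ * (∑ i, e i ^ 2) ≤ (K0 / Real.sqrt n) * ((m:ℝ) * (4 * K0 ^ 2 / n)) :=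
      mul_le_mul hnb hSe' hSe0 (by positivity)
    calc η * (2 * ((m:ℝ) * ‖b‖) / pm ^ 2 * (1 + (m:ℝ)) * (∑ i, e i ^ 2))
        = (2 * η * (1 + (m:ℝ)) * (m:ℝ) / pm ^ 2) * (‖b‖ * (∑ i, e i ^ 2)) := by ring
      _ ≤ (2 * η * (1 + (m:ℝ)) * (m:ℝ) / pm ^ 2)
            * ((K0 / Real.sqrt n) * ((m:ℝ) * (4 * K0 ^ 2 / n))) := by
          apply mul_le_mul_of_nonneg_left hprod (by positivity)
      _ = Cb / np := by
          rw [hCbdef, hnp]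
          field_simp
          ring
  -- the main quadratic bound
  have h2η : 2 * η * (quadForm (SigmaMat Ps) a + quadForm (SigmaMat Ps) b)
      ≤ rseq n - (Cerr + 1) / np := by
    have h := mul_le_mul_of_nonneg_left hq (by positivity : (0:ℝ) ≤ 2 * η)
    have hEq : 2 * η * (rseq n / (2 * η) - M₃ / np) = rseq n - (Cerr + 1) / np := by
      rw [hM₃def]
      field_simp
    linarith
  have hQR : η * quadForm (SigmaMat R) e
      ≤ η * quadForm (SigmaMat Ps) e
        + η * (2 * ((m:ℝ) * ‖b‖) / pm ^ 2 * (1 + (m:ℝ)) * (∑ i, e i ^ 2)) := by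
    have := mul_le_mul_of_nonneg_left hswap hη.le
    rw [mul_add] at this
    exact this
  have hQP : η * quadForm (SigmaMat Ps) e
      ≤ 2 * η * (quadForm (SigmaMat Ps) a + quadForm (SigmaMat Ps) b) := by
    have := mul_le_mul_of_nonneg_left hsub hη.le
    calc η * quadForm (SigmaMat Ps) e
        ≤ η * (2 * quadForm (SigmaMat Ps) a + 2 * quadForm (SigmaMat Ps) b) := this
      _ = 2 * η * (quadForm (SigmaMat Ps) a + quadForm (SigmaMat Ps) b) := by ring
  have hsplit : (Cerr + 1) / np = 8 * M' * K0 ^ 3 / np + Cb / np + 1 / np := by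
    rw [hCerrdef]; ring
  have hfinal : Dapp D T R ≤ rseq n - 1 / np := by
    have habs := (abs_le.mp htay2).2
    linarith
  have : 0 < 1 / np := by positivity
  linarith

end TwoSampleTest
end

section
/- Let P_1 ≠ P_2 ∈ 𝒫(𝒵), let P* be the normalized geometric mean of P_1 and P_2, and let {r̃_n} be a sequence of positive thresholds with r̃_n = Θ(1/n). For each n, let (Γ'_n, Γ''_n) be a pair of distributions minimizing ℓ_{P*}(T,R) over all (T,R) ∈ A_{Σ_{𝐏*}}(r̃_n). Then there exist Ñ ∈ ℕ and a constant κ > 0 such that for every n ≥ Ñ there exists a pair of type distributions (P'_n, P''_n) with denominator n lying in A_{Σ_{𝐏*}}(r̃_n) and satisfying |n·ℓ_{P*}(Γ'_n,Γ''_n) − n·ℓ_{P*}(P'_n,P''_n)| ≤ κ. -/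
open scoped BigOperators
open Filter MeasureTheory Matrix

namespace TwoSampleTest

variable {m : ℕ}

lemma quadForm_sigma (P : Fin (m+1) → ℝ) (v : Fin m → ℝ) :
    quadForm (SigmaMat P) v
      = ∑ i, (v i)^2 / P i.castSucc + (∑ i, v i)^2 / P (Fin.last m) := by
  have h : ∀ i, (SigmaMat P).mulVec v i = v i / P i.castSucc + (∑ j, v j) / P (Fin.last m) := by
    intro i
    simp only [Matrix.mulVec, dotProduct, SigmaMat, Matrix.of_apply]
    rw [Finset.sum_congr rfl (fun j _ => show
      (if i = j then 1 / P i.castSucc + 1 / P (Fin.last m) else 1 / P (Fin.last m)) * v j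
        = (if i = j then v j / P i.castSucc else 0) + 1 / P (Fin.last m) * v j by
      by_cases hij : i = j <;> simp [hij] <;> ring)]
    rw [Finset.sum_add_distrib, Finset.sum_ite_eq, if_pos (Finset.mem_univ i)]
    rw [← Finset.mul_sum]
    ring
  unfold quadForm
  simp only [dotProduct]
  rw [Finset.sum_congr rfl (fun i _ => by rw [h i])]
  rw [Finset.sum_congr rfl (fun i _ => show
    v i * (v i / P i.castSucc + (∑ j, v j) / P (Fin.last m))
      = (v i)^2 / P i.castSucc + v i * ((∑ j, v j) / P (Fin.last m)) by ring)]
  rw [Finset.sum_add_distrib, ← Finset.sum_mul]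
  ring

noncomputable def rnd (n : ℕ) (Q : Fin (m+1) → ℝ) : Fin (m+1) → ℝ :=
  fun i => if i = Fin.last m
    then ((n - ∑ j : Fin m, ⌊(n:ℝ) * Q j.castSucc⌋₊ : ℕ) : ℝ) / n
    else (⌊(n:ℝ) * Q i⌋₊ : ℝ) / n

lemma rnd_spec {n : ℕ} (hn : 0 < n) (Q : Fin (m+1) → ℝ) (hQ : IsPosDist Q) :
    IsTypeDist n (rnd n Q) ∧
    (∀ j : Fin m, rnd n Q j.castSucc ≤ Q j.castSucc ∧
      Q j.castSucc - 1/n ≤ rnd n Q j.castSucc) ∧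
    (Q (Fin.last m) ≤ rnd n Q (Fin.last m) ∧
      rnd n Q (Fin.last m) ≤ Q (Fin.last m) + m/n) := by
  have hnR : (0:ℝ) < n := by exact_mod_cast hn
  have hQpos := hQ.1
  have hQsum := hQ.2
  -- basic floor bounds at castSucc coordinates
  have hcs : ∀ j : Fin m, j.castSucc ≠ Fin.last m := fun j => (Fin.castSucc_lt_last j).ne
  have hfl : ∀ j : Fin m, rnd n Q j.castSucc = (⌊(n:ℝ) * Q j.castSucc⌋₊ : ℝ) / n := by
    intro j; simp [rnd, hcs j]
  have hle : ∀ j : Fin m, rnd n Q j.castSucc ≤ Q j.castSucc := by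
    intro j
    rw [hfl j, div_le_iff₀ hnR]
    have := Nat.floor_le (mul_nonneg hnR.le (hQpos j.castSucc).le)
    linarith [this]
  have hge : ∀ j : Fin m, Q j.castSucc - 1/n ≤ rnd n Q j.castSucc := by
    intro j
    rw [hfl j, sub_le_iff_le_add, ← add_div, le_div_iff₀ hnR]
    have := (Nat.lt_floor_add_one ((n:ℝ) * Q j.castSucc)).le
    linarith [this]
  -- the sum of floors is at most n
  have hS : (∑ j : Fin m, ⌊(n:ℝ) * Q j.castSucc⌋₊) ≤ n := by
    have h1 : ((∑ j : Fin m, ⌊(n:ℝ) * Q j.castSucc⌋₊ : ℕ) : ℝ) ≤ ∑ j : Fin m, (n:ℝ) * Q j.castSucc := by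
      push_cast
      apply Finset.sum_le_sum
      intro j _
      exact Nat.floor_le (mul_nonneg hnR.le (hQpos j.castSucc).le)
    have h2 : ∑ j : Fin m, (n:ℝ) * Q j.castSucc ≤ (n:ℝ) := by
      rw [← Finset.mul_sum]
      have : ∑ j : Fin m, Q j.castSucc ≤ 1 := by
        have := Fin.sum_univ_castSucc (f := Q)
        nlinarith [hQpos (Fin.last m), hQsum, this]
      nlinarith
    exact_mod_cast h1.trans h2
  have hcastS : ((n - ∑ j : Fin m, ⌊(n:ℝ) * Q j.castSucc⌋₊ : ℕ) : ℝ)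
      = (n:ℝ) - ((∑ j : Fin m, ⌊(n:ℝ) * Q j.castSucc⌋₊ : ℕ) : ℝ) := by
    exact Nat.cast_sub hS
  have hrl : rnd n Q (Fin.last m)
      = ((n - ∑ j : Fin m, ⌊(n:ℝ) * Q j.castSucc⌋₊ : ℕ) : ℝ) / n := by simp [rnd]
  have hlast : rnd n Q (Fin.last m) = 1 - ∑ j : Fin m, rnd n Q j.castSucc := by
    rw [hrl, hcastS, Finset.sum_congr rfl (fun j _ => hfl j), ← Finset.sum_div]
    push_cast
    field_simp
  have hsum : ∑ i, rnd n Q i = 1 := by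
    rw [Fin.sum_univ_castSucc, hlast]; ring
  have hQlast : Q (Fin.last m) = 1 - ∑ j : Fin m, Q j.castSucc := by
    have := Fin.sum_univ_castSucc (f := Q)
    linarith [hQsum, this]
  have hlastge : Q (Fin.last m) ≤ rnd n Q (Fin.last m) := by
    rw [hlast, hQlast]
    have : ∑ j : Fin m, rnd n Q j.castSucc ≤ ∑ j : Fin m, Q j.castSucc :=
      Finset.sum_le_sum (fun j _ => hle j)
    linarith
  have hlastle : rnd n Q (Fin.last m) ≤ Q (Fin.last m) + m/n := by
    rw [hlast, hQlast]
    have : ∑ j : Fin m, (Q j.castSucc - 1/n) ≤ ∑ j : Fin m, rnd n Q j.castSucc :=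
      Finset.sum_le_sum (fun j _ => hge j)
    rw [Finset.sum_sub_distrib] at this
    simp only [Finset.sum_const, Finset.card_univ, Fintype.card_fin, nsmul_eq_mul] at this
    have hmn : (m:ℝ) * (1/n) = m/n := by ring
    linarith
  refine ⟨⟨⟨?_, hsum⟩, ?_⟩, fun j => ⟨hle j, hge j⟩, hlastge, hlastle⟩
  · intro i
    by_cases hi : i = Fin.last m
    · subst hi; simp only [rnd, if_pos rfl]; positivity
    · simp only [rnd, if_neg hi]; positivity
  · intro i
    by_cases hi : i = Fin.last m
    · subst hi; exact ⟨n - ∑ j : Fin m, ⌊(n:ℝ) * Q j.castSucc⌋₊, hrl⟩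
    · exact ⟨⌊(n:ℝ) * Q i⌋₊, by simp [rnd, hi]⟩

lemma ellP_scale (P P₁ P₂ T R : Fin (m+1) → ℝ) (θ : ℝ) :
    ellP P P₁ P₂ (fun i => P i + θ * (T i - P i)) (fun i => P i + θ * (R i - P i))
      = θ * ellP P P₁ P₂ T R := by
  unfold ellP
  rw [mul_add, Finset.mul_sum, Finset.mul_sum]
  congr 1 <;> exact Finset.sum_congr rfl (fun i _ => by ring)

lemma ellP_diff_bound (P P₁ P₂ T R T' R' : Fin (m+1) → ℝ) (c : ℝ)
    (hT : ∀ i, |T i - T' i| ≤ c) (hR : ∀ i, |R i - R' i| ≤ c) :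
    |ellP P P₁ P₂ T R - ellP P P₁ P₂ T' R'|
      ≤ c * ∑ i, (|Real.log (P i / P₁ i)| + |Real.log (P i / P₂ i)|) := by
  have key : ellP P P₁ P₂ T R - ellP P P₁ P₂ T' R'
      = ∑ i, (T i - T' i) * Real.log (P i / P₁ i)
        + ∑ i, (R i - R' i) * Real.log (P i / P₂ i) := by
    have e1 : ∑ i, (T i - T' i) * Real.log (P i / P₁ i)
        = ∑ i, (T i - P i) * Real.log (P i / P₁ i)
          - ∑ i, (T' i - P i) * Real.log (P i / P₁ i) := by
      rw [← Finset.sum_sub_distrib]; exact Finset.sum_congr rfl (fun i _ => by ring)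
    have e2 : ∑ i, (R i - R' i) * Real.log (P i / P₂ i)
        = ∑ i, (R i - P i) * Real.log (P i / P₂ i)
          - ∑ i, (R' i - P i) * Real.log (P i / P₂ i) := by
      rw [← Finset.sum_sub_distrib]; exact Finset.sum_congr rfl (fun i _ => by ring)
    unfold ellP
    rw [e1, e2]
    ring
  rw [key, Finset.mul_sum]
  calc |∑ i, (T i - T' i) * Real.log (P i / P₁ i)
        + ∑ i, (R i - R' i) * Real.log (P i / P₂ i)|
      ≤ |∑ i, (T i - T' i) * Real.log (P i / P₁ i)|
        + |∑ i, (R i - R' i) * Real.log (P i / P₂ i)| := abs_add_le _ _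
    _ ≤ ∑ i, |(T i - T' i) * Real.log (P i / P₁ i)|
        + ∑ i, |(R i - R' i) * Real.log (P i / P₂ i)| :=
        add_le_add (Finset.abs_sum_le_sum_abs _ _) (Finset.abs_sum_le_sum_abs _ _)
    _ ≤ ∑ i, c * |Real.log (P i / P₁ i)| + ∑ i, c * |Real.log (P i / P₂ i)| := by
        apply add_le_add <;> apply Finset.sum_le_sum <;> intro i _ <;>
          rw [abs_mul] <;>
          exact mul_le_mul_of_nonneg_right (by first | exact hT i | exact hR i) (abs_nonneg _)
    _ = ∑ i, c * (|Real.log (P i / P₁ i)| + |Real.log (P i / P₂ i)|) := by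
        rw [← Finset.sum_add_distrib]; exact Finset.sum_congr rfl (fun i _ => by ring)

lemma ellP_abs_bound (P P₁ P₂ T R : Fin (m+1) → ℝ) (c : ℝ)
    (hT : ∀ i, |T i - P i| ≤ c) (hR : ∀ i, |R i - P i| ≤ c) :
    |ellP P P₁ P₂ T R|
      ≤ c * ∑ i, (|Real.log (P i / P₁ i)| + |Real.log (P i / P₂ i)|) := by
  have h0 : ellP P P₁ P₂ P P = 0 := by unfold ellP; simp
  have := ellP_diff_bound P P₁ P₂ T R P P c hT hR
  rw [h0, sub_zero] at this
  exact this

lemma quadForm_nonneg (P : Fin (m+1) → ℝ) (hP : ∀ i, 0 < P i) (v : Fin m → ℝ) :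
    0 ≤ quadForm (SigmaMat P) v := by
  rw [quadForm_sigma]
  have h1 : (0:ℝ) ≤ ∑ i, (v i)^2 / P i.castSucc :=
    Finset.sum_nonneg (fun i _ => div_nonneg (sq_nonneg _) (hP _).le)
  have h2 : (0:ℝ) ≤ (∑ i, v i)^2 / P (Fin.last m) := div_nonneg (sq_nonneg _) (hP _).le
  linarith

lemma sq_coord_le_quadForm (P : Fin (m+1) → ℝ) (hP : ∀ i, 0 < P i)
    (hP1 : ∀ i, P i ≤ 1) (v : Fin m → ℝ) (i : Fin m) :
    (v i)^2 ≤ quadForm (SigmaMat P) v := by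
  rw [quadForm_sigma]
  have h2 : (0:ℝ) ≤ (∑ j, v j)^2 / P (Fin.last m) := div_nonneg (sq_nonneg _) (hP _).le
  have h3 : (v i)^2 ≤ ∑ j, (v j)^2 / P j.castSucc := by
    have hterm : (v i)^2 ≤ (v i)^2 / P i.castSucc := by
      rw [le_div_iff₀ (hP _)]
      nlinarith [sq_nonneg (v i), hP i.castSucc, hP1 i.castSucc]
    refine hterm.trans (Finset.single_le_sum (f := fun j => (v j)^2 / P j.castSucc)
      (fun j _ => div_nonneg (sq_nonneg _) (hP _).le) (Finset.mem_univ i))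
  linarith

lemma quadForm_le (P : Fin (m+1) → ℝ) (hP : ∀ i, 0 < P i) (p : ℝ) (hp : 0 < p)
    (hple : ∀ i, p ≤ P i) (v : Fin m → ℝ) (c : ℝ) (hc : 0 ≤ c) (hv : ∀ i, |v i| ≤ c) :
    quadForm (SigmaMat P) v ≤ (m * c^2 + (m*c)^2) / p := by
  rw [quadForm_sigma]
  have h1 : ∑ i, (v i)^2 / P i.castSucc ≤ ∑ i : Fin m, c^2 / p := by
    apply Finset.sum_le_sum
    intro i _
    apply div_le_div₀ (by positivity) _ hp (hple _)
    · nlinarith [hv i, abs_nonneg (v i), sq_abs (v i)]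
  have h2 : (∑ i, v i)^2 / P (Fin.last m) ≤ (m*c)^2 / p := by
    apply div_le_div₀ (by positivity) _ hp (hple _)
    have habs : |∑ i, v i| ≤ m * c := by
      calc |∑ i, v i| ≤ ∑ i, |v i| := Finset.abs_sum_le_sum_abs _ _
        _ ≤ ∑ _i : Fin m, c := Finset.sum_le_sum (fun i _ => hv i)
        _ = m * c := by simp [Finset.sum_const, mul_comm]
    nlinarith [abs_nonneg (∑ i, v i), sq_abs (∑ i, v i)]
  simp only [Finset.sum_const, Finset.card_univ, Fintype.card_fin, nsmul_eq_mul] at h1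
  have : (m:ℝ) * (c^2/p) = m * c^2 / p := by ring
  rw [this] at h1
  have hsplit : ((m:ℝ) * c^2 + ((m:ℝ)*c)^2) / p = (m:ℝ)*c^2/p + ((m:ℝ)*c)^2/p := by ring
  rw [hsplit]
  linarith

lemma quadForm_perturb (P : Fin (m+1) → ℝ) (hP : ∀ i, 0 < P i)
    (d e : Fin m → ℝ) (θ t : ℝ) (ht : 0 < t) :
    quadForm (SigmaMat P) (fun i => θ * d i + e i)
      ≤ (1+t) * θ^2 * quadForm (SigmaMat P) d + (1+1/t) * quadForm (SigmaMat P) e := by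
  have key : ∀ a b : ℝ, (θ*a+b)^2 ≤ (1+t)*(θ^2*a^2) + (1+1/t)*b^2 := by
    intro a b
    have h1 : t * (1/t) = 1 := mul_one_div_cancel ht.ne'
    nlinarith [sq_nonneg (t*(θ*a) - b), ht, mul_pos ht ht, sq_nonneg b]
  rw [quadForm_sigma, quadForm_sigma, quadForm_sigma]
  have hsum : ∑ i, (θ * d i + e i) = θ * ∑ i, d i + ∑ i, e i := by
    rw [Finset.sum_add_distrib, Finset.mul_sum]
  calc ∑ i, (θ * d i + e i)^2 / P i.castSucc + (∑ i, (θ * d i + e i))^2 / P (Fin.last m)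
      ≤ ∑ i, ((1+t)*(θ^2*(d i)^2) + (1+1/t)*(e i)^2) / P i.castSucc
        + ((1+t)*(θ^2*(∑ i, d i)^2) + (1+1/t)*(∑ i, e i)^2) / P (Fin.last m) := by
        apply add_le_add
        · apply Finset.sum_le_sum
          intro i _
          exact (div_le_div_iff_of_pos_right (hP _)).mpr (key (d i) (e i))
        · rw [hsum]
          exact (div_le_div_iff_of_pos_right (hP _)).mpr (key (∑ i, d i) (∑ i, e i))
    _ = (1+t) * θ^2 * (∑ i, (d i)^2 / P i.castSucc + (∑ i, d i)^2 / P (Fin.last m))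
        + (1+1/t) * (∑ i, (e i)^2 / P i.castSucc + (∑ i, e i)^2 / P (Fin.last m)) := by
        rw [Finset.sum_congr rfl (fun i _ => show
          ((1+t)*(θ^2*(d i)^2) + (1+1/t)*(e i)^2) / P i.castSucc
            = (1+t)*θ^2 * ((d i)^2 / P i.castSucc) + (1+1/t) * ((e i)^2 / P i.castSucc) by
          ring)]
        rw [Finset.sum_add_distrib, ← Finset.mul_sum, ← Finset.mul_sum]
        ring

lemma Pstar_posDist {m : ℕ} {P₁ P₂ : Fin (m+1) → ℝ}
    (h₁ : IsPosDist P₁) (h₂ : IsPosDist P₂) : IsPosDist (Pstar P₁ P₂) := by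
  have hS : 0 < ∑ j, Real.sqrt (P₁ j * P₂ j) := by
    apply Finset.sum_pos _ Finset.univ_nonempty
    intro j _
    exact Real.sqrt_pos.mpr (mul_pos (h₁.1 j) (h₂.1 j))
  constructor
  · intro i
    exact div_pos (Real.sqrt_pos.mpr (mul_pos (h₁.1 i) (h₂.1 i))) hS
  · unfold Pstar
    rw [← Finset.sum_div]
    field_simp

lemma aux_sq (x : ℝ) (hx : 0 ≤ x) : x ≤ (1 + Real.sqrt x)^2 := by
  nlinarith [Real.sq_sqrt hx, Real.sqrt_nonneg x]

lemma aux_contract (t : ℝ) (h0 : 0 < t) (h1 : t ≤ 1) : (1+t)*(1-t)^2 ≤ 1-t := by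
  nlinarith [mul_nonneg (mul_self_nonneg t) (by linarith : (0:ℝ) ≤ 1-t)]


set_option maxHeartbeats 2000000 in
/-- (Existence of nearly-minimizing types.) If `(Γ'_n, Γ''_n)` minimizes
`ℓ_{P*}` over `A_{Σ_{𝐏*}}(r̃_n)` with `r̃_n = Θ(1/n)`, then for all large `n` there is a
pair of type distributions with denominator `n` in `A_{Σ_{𝐏*}}(r̃_n)` whose value of
`n·ℓ_{P*}` is within a constant `κ` of `n·ℓ_{P*}(Γ'_n,Γ''_n)`. -/
theorem type_approx_minimizer {m : ℕ} (hm : 1 ≤ m)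
    (P₁ P₂ : Fin (m+1) → ℝ) (h₁ : IsPosDist P₁) (h₂ : IsPosDist P₂) (hne : P₁ ≠ P₂)
    (rt : ℕ → ℝ) (hrpos : ∀ n, 0 < rt n)
    (hΘ : ∃ c₁ > (0:ℝ), ∃ c₂ > (0:ℝ), ∃ N : ℕ, ∀ n ≥ N,
      c₁ / n ≤ rt n ∧ rt n ≤ c₂ / n)
    (Γ' Γ'' : ℕ → Fin (m+1) → ℝ)
    (hΓmem : ∀ n, memASigma (Pstar P₁ P₂) (Γ' n) (Γ'' n) (rt n))
    (hΓmin : ∀ n, ∀ T R : Fin (m+1) → ℝ, memASigma (Pstar P₁ P₂) T R (rt n) →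
      ellP (Pstar P₁ P₂) P₁ P₂ (Γ' n) (Γ'' n) ≤ ellP (Pstar P₁ P₂) P₁ P₂ T R) :
    ∃ Ntilde : ℕ, ∃ κ > (0:ℝ), ∀ n ≥ Ntilde, ∃ P' P'' : Fin (m+1) → ℝ,
      IsTypeDist n P' ∧ IsTypeDist n P'' ∧
      memASigma (Pstar P₁ P₂) P' P'' (rt n) ∧
      |(n : ℝ) * ellP (Pstar P₁ P₂) P₁ P₂ (Γ' n) (Γ'' n)
        - (n : ℝ) * ellP (Pstar P₁ P₂) P₁ P₂ P' P''| ≤ κ := by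
  classical
  obtain ⟨c₁, hc₁, c₂, hc₂, N, hNΘ⟩ := hΘ
  have hP : IsPosDist (Pstar P₁ P₂) := Pstar_posDist h₁ h₂
  set P : Fin (m+1) → ℝ := Pstar P₁ P₂ with hPdef
  clear_value P
  have hPpos : ∀ i, 0 < P i := hP.1
  have hPsum : ∑ i, P i = 1 := hP.2
  have hP1 : ∀ i, P i ≤ 1 := by
    intro i
    have h := Finset.single_le_sum (f := P) (fun j _ => (hPpos j).le) (Finset.mem_univ i)
    linarith only [h, hPsum]
  -- minimum of P
  set p : ℝ := Finset.univ.inf' Finset.univ_nonempty P with hpdef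
  clear_value p
  have hp : 0 < p := by
    rw [hpdef, Finset.lt_inf'_iff]
    exact fun i _ => hPpos i
  have hple : ∀ i, p ≤ P i := by
    intro i
    rw [hpdef]
    exact Finset.inf'_le _ (Finset.mem_univ i)
  -- constants
  set M : ℝ := ∑ i, (|Real.log (P i / P₁ i)| + |Real.log (P i / P₂ i)|) with hMdef
  clear_value M
  have hM : 0 ≤ M := by
    rw [hMdef]
    exact Finset.sum_nonneg (fun i _ => add_nonneg (abs_nonneg _) (abs_nonneg _))
  set Λ : ℝ := ((m:ℝ) + (m:ℝ)^2) / p with hΛdef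
  clear_value Λ
  have hΛ : 0 < Λ := by
    have hm' : (1:ℝ) ≤ (m:ℝ) := by exact_mod_cast hm
    rw [hΛdef]
    apply div_pos _ hp
    linarith only [hm', sq_nonneg (m:ℝ)]
  set K : ℝ := 1 + Real.sqrt (4*Λ/c₁) with hKdef
  clear_value K
  have hK1 : 1 ≤ K := by
    have h := Real.sqrt_nonneg (4*Λ/c₁)
    rw [hKdef]; linarith only [h]
  have hK0 : 0 < K := by linarith only [hK1]
  have hK2 : 4*Λ/c₁ ≤ K^2 := by
    have h1 : (0:ℝ) ≤ 4*Λ/c₁ := le_of_lt (div_pos (by linarith only [hΛ]) hc₁)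
    rw [hKdef]
    exact aux_sq _ h1
  set κ : ℝ := K * m * M * Real.sqrt c₂ + m * M + 1 with hκdef
  clear_value κ
  -- the threshold index
  obtain ⟨N₁, hN₁⟩ := exists_nat_ge (max (max (K^2) (4*c₂/p^2)) (4/p))
  refine ⟨max N (max N₁ 1), κ, ?_, ?_⟩
  · have h1 : 0 ≤ K * m * M * Real.sqrt c₂ :=
      mul_nonneg (mul_nonneg (mul_nonneg hK0.le (Nat.cast_nonneg m)) hM) (Real.sqrt_nonneg _)
    have h2 : 0 ≤ (m:ℝ) * M := mul_nonneg (Nat.cast_nonneg m) hM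
    rw [hκdef]; linarith only [h1, h2]
  intro n hn
  have hnN : N ≤ n := le_trans (le_max_left _ _) hn
  have hnN₁ : N₁ ≤ n := le_trans (le_trans (le_max_left _ _) (le_max_right N _)) hn
  have hn1 : 1 ≤ n := le_trans (le_trans (le_max_right _ _) (le_max_right N _)) hn
  have hn0 : 0 < n := hn1
  have hnR : (0:ℝ) < n := by exact_mod_cast hn0
  have hnmax : max (max (K^2) (4*c₂/p^2)) (4/p) ≤ (n:ℝ) :=
    le_trans hN₁ (by exact_mod_cast hnN₁)
  have hnK : K^2 ≤ (n:ℝ) := le_trans (le_trans (le_max_left _ _) (le_max_left _ _)) hnmax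
  have hnc₂ : 4*c₂/p^2 ≤ (n:ℝ) := le_trans (le_trans (le_max_right _ _) (le_max_left _ _)) hnmax
  have hnp : 4/p ≤ (n:ℝ) := le_trans (le_max_right _ _) hnmax
  obtain ⟨hrt₁, hrt₂⟩ := hNΘ n hnN
  have hrt0 : 0 < rt n := hrpos n
  -- square roots
  have hsqn : 0 < Real.sqrt n := Real.sqrt_pos.mpr hnR
  have hKsq : K ≤ Real.sqrt n := by
    rw [show K = Real.sqrt (K^2) from (Real.sqrt_sq hK0.le).symm]
    exact Real.sqrt_le_sqrt hnK
  set t : ℝ := K / Real.sqrt n with htdef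
  clear_value t
  have ht0 : 0 < t := by
    rw [htdef]
    exact div_pos hK0 hsqn
  have ht1 : t ≤ 1 := by
    rw [htdef, div_le_one hsqn]; exact hKsq
  set θ : ℝ := 1 - t with hθdef
  clear_value θ
  have hθ0 : 0 ≤ θ := by rw [hθdef]; linarith only [ht1]
  have hθ1 : θ ≤ 1 := by rw [hθdef]; linarith only [ht0]
  -- bounds from membership
  obtain ⟨hΓ'pos, hΓ''pos, hq⟩ := hΓmem n
  set q' : ℝ := quadForm (SigmaMat P) (fun i => coordOf (Γ' n) i - coordOf P i) with hq'def
  set q'' : ℝ := quadForm (SigmaMat P) (fun i => coordOf (Γ'' n) i - coordOf P i) with hq''def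
  clear_value q' q''
  have hq'0 : 0 ≤ q' := by rw [hq'def]; exact quadForm_nonneg P hPpos _
  have hq''0 : 0 ≤ q'' := by rw [hq''def]; exact quadForm_nonneg P hPpos _
  have hq'le : q' ≤ rt n := by linarith only [hq, hq'0, hq''0]
  have hq''le : q'' ≤ rt n := by linarith only [hq, hq'0, hq''0]
  have hsqrt_rt : Real.sqrt (rt n) ≤ Real.sqrt c₂ / Real.sqrt n := by
    rw [← Real.sqrt_div hc₂.le]
    exact Real.sqrt_le_sqrt hrt₂
  have hsqp : Real.sqrt (rt n) ≤ p/2 := by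
    have h1 : rt n ≤ (p/2)^2 := by
      have hc2p : c₂ / n ≤ p^2/4 := by
        have h4 : 4*c₂ ≤ (n:ℝ) * p^2 := by
          rw [div_le_iff₀ (pow_pos hp 2)] at hnc₂
          linarith only [hnc₂]
        rw [div_le_div_iff₀ hnR (by norm_num : (0:ℝ) < 4)]
        calc c₂ * 4 = 4 * c₂ := by ring
          _ ≤ (n:ℝ) * p^2 := h4
          _ = p^2 * n := by ring
      have hpe : (p/2)^2 = p^2/4 := by ring
      linarith only [hrt₂, hc2p, hpe]
    calc Real.sqrt (rt n) ≤ Real.sqrt ((p/2)^2) := Real.sqrt_le_sqrt h1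
      _ = p/2 := Real.sqrt_sq (by linarith only [hp])
  have h1n : 1/(n:ℝ) ≤ p/4 := by
    rw [div_le_div_iff₀ hnR (by norm_num : (0:ℝ) < 4)]
    calc (1:ℝ) * 4 = 4 := by ring
      _ ≤ p * n := by
        rw [div_le_iff₀ hp] at hnp
        linarith only [hnp]
  -- coordinate bounds on Γ' - P and Γ'' - P
  have coordbound : ∀ (Γ : Fin (m+1) → ℝ), IsPosDist Γ →
      quadForm (SigmaMat P) (fun i => coordOf Γ i - coordOf P i) ≤ rt n →
      (∀ j : Fin m, |Γ j.castSucc - P j.castSucc| ≤ Real.sqrt (rt n)) ∧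
      (∀ i, |Γ i - P i| ≤ m * Real.sqrt (rt n)) := by
    intro Γ hΓpos hqle
    have hcs : ∀ j : Fin m, |Γ j.castSucc - P j.castSucc| ≤ Real.sqrt (rt n) := by
      intro j
      have h1 : (Γ j.castSucc - P j.castSucc)^2 ≤ rt n := by
        have h := sq_coord_le_quadForm P hPpos hP1 (fun i => coordOf Γ i - coordOf P i) j
        simp only [coordOf] at h hqle
        linarith only [h, hqle]
      calc |Γ j.castSucc - P j.castSucc|
          = Real.sqrt ((Γ j.castSucc - P j.castSucc)^2) := (Real.sqrt_sq_eq_abs _).symm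
        _ ≤ Real.sqrt (rt n) := Real.sqrt_le_sqrt h1
    refine ⟨hcs, ?_⟩
    intro i
    have hm1 : (1:ℝ) ≤ (m:ℝ) := by exact_mod_cast hm
    rcases Fin.eq_castSucc_or_eq_last i with ⟨j, rfl⟩ | rfl
    · calc |Γ j.castSucc - P j.castSucc| ≤ Real.sqrt (rt n) := hcs j
        _ = 1 * Real.sqrt (rt n) := (one_mul _).symm
        _ ≤ m * Real.sqrt (rt n) :=
            mul_le_mul_of_nonneg_right hm1 (Real.sqrt_nonneg _)
    · have hlasteq : Γ (Fin.last m) - P (Fin.last m)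
          = -(∑ j : Fin m, (Γ j.castSucc - P j.castSucc)) := by
        have e1 := Fin.sum_univ_castSucc (f := Γ)
        have e2 := Fin.sum_univ_castSucc (f := P)
        rw [Finset.sum_sub_distrib]
        linarith only [e1, e2, hΓpos.2, hPsum]
      rw [hlasteq, abs_neg]
      calc |∑ j : Fin m, (Γ j.castSucc - P j.castSucc)|
          ≤ ∑ j : Fin m, |Γ j.castSucc - P j.castSucc| := Finset.abs_sum_le_sum_abs _ _
        _ ≤ ∑ _j : Fin m, Real.sqrt (rt n) := Finset.sum_le_sum (fun j _ => hcs j)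
        _ = m * Real.sqrt (rt n) := by
            simp [Finset.sum_const, mul_comm]
  obtain ⟨hcs', hall'⟩ := coordbound (Γ' n) hΓ'pos (by rw [← hq'def]; exact hq'le)
  obtain ⟨hcs'', hall''⟩ := coordbound (Γ'' n) hΓ''pos (by rw [← hq''def]; exact hq''le)
  -- the contracted distributions
  set Q' : Fin (m+1) → ℝ := fun i => P i + θ * (Γ' n i - P i) with hQ'def
  set Q'' : Fin (m+1) → ℝ := fun i => P i + θ * (Γ'' n i - P i) with hQ''def
  clear_value Q' Q''
  have hQpos : ∀ (Γ : Fin (m+1) → ℝ), IsPosDist Γ →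
      IsPosDist (fun i => P i + θ * (Γ i - P i)) := by
    intro Γ hΓpos
    constructor
    · intro i
      show (0:ℝ) < P i + θ * (Γ i - P i)
      have h1 : 0 < min (P i) (Γ i) := lt_min (hPpos i) (hΓpos.1 i)
      have h2 : (1-θ) * min (P i) (Γ i) ≤ (1-θ) * P i :=
        mul_le_mul_of_nonneg_left (min_le_left _ _) (by linarith only [hθ1])
      have h3 : θ * min (P i) (Γ i) ≤ θ * Γ i :=
        mul_le_mul_of_nonneg_left (min_le_right _ _) hθ0
      have h4 : (1-θ) * min (P i) (Γ i) + θ * min (P i) (Γ i) = min (P i) (Γ i) := by ring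
      have h5 : P i + θ * (Γ i - P i) = (1-θ) * P i + θ * Γ i := by ring
      rw [h5]
      linarith only [h1, h2, h3, h4]
    · have : ∑ i, (P i + θ * (Γ i - P i))
          = ∑ i, P i + θ * (∑ i, Γ i - ∑ i, P i) := by
        rw [Finset.sum_add_distrib, ← Finset.mul_sum, Finset.sum_sub_distrib]
      rw [this, hPsum, hΓpos.2]
      ring
  have hQ'pos : IsPosDist Q' := by rw [hQ'def]; exact hQpos (Γ' n) hΓ'pos
  have hQ''pos : IsPosDist Q'' := by rw [hQ''def]; exact hQpos (Γ'' n) hΓ''pos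
  -- lower bounds on Q at castSucc coordinates
  have hQcs : ∀ (Γ : Fin (m+1) → ℝ),
      (∀ j : Fin m, |Γ j.castSucc - P j.castSucc| ≤ Real.sqrt (rt n)) →
      ∀ j : Fin m, p/2 ≤ P j.castSucc + θ * (Γ j.castSucc - P j.castSucc) := by
    intro Γ hcs j
    have h1 := hcs j
    have h2 := hple j.castSucc
    have h3 : |θ * (Γ j.castSucc - P j.castSucc)| ≤ Real.sqrt (rt n) := by
      rw [abs_mul, abs_of_nonneg hθ0]
      calc θ * |Γ j.castSucc - P j.castSucc| ≤ 1 * |Γ j.castSucc - P j.castSucc| :=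
            mul_le_mul_of_nonneg_right hθ1 (abs_nonneg _)
        _ ≤ Real.sqrt (rt n) := by rw [one_mul]; exact h1
    have h4 := abs_le.mp h3
    linarith only [h2, h4.1, hsqp]
  -- round
  obtain ⟨htype', hcsr', hlastr'⟩ := rnd_spec hn0 Q' hQ'pos
  obtain ⟨htype'', hcsr'', hlastr''⟩ := rnd_spec hn0 Q'' hQ''pos
  refine ⟨rnd n Q', rnd n Q'', htype', htype'', ?_, ?_⟩
  · -- membership in A_Sigma
    have hposT : ∀ (Q : Fin (m+1) → ℝ), IsPosDist Q →
        (∀ j : Fin m, p/2 ≤ Q j.castSucc) →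
        (∀ j : Fin m, rnd n Q j.castSucc ≤ Q j.castSucc ∧
          Q j.castSucc - 1/n ≤ rnd n Q j.castSucc) →
        (Q (Fin.last m) ≤ rnd n Q (Fin.last m)) →
        IsPosDist (rnd n Q) := by
      intro Q hQp hcsQ hr hrl
      refine ⟨?_, ?_⟩
      · intro i
        rcases Fin.eq_castSucc_or_eq_last i with ⟨j, rfl⟩ | rfl
        · have a1 := (hr j).2
          have a2 := hcsQ j
          linarith only [a1, a2, h1n, hp]
        · linarith only [hrl, hQp.1 (Fin.last m)]
      · rcases rnd_spec hn0 Q hQp with ⟨⟨⟨_, hs⟩, _⟩, _, _⟩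
        exact hs
    refine ⟨hposT Q' hQ'pos (by rw [hQ'def]; exact hQcs (Γ' n) hcs') hcsr' hlastr'.1,
      hposT Q'' hQ''pos (by rw [hQ''def]; exact hQcs (Γ'' n) hcs'') hcsr'' hlastr''.1, ?_⟩
    -- quadratic form bound
    have key : ∀ (Γ Q : Fin (m+1) → ℝ), Q = (fun i => P i + θ * (Γ i - P i)) →
        (∀ j : Fin m, rnd n Q j.castSucc ≤ Q j.castSucc ∧
          Q j.castSucc - 1/n ≤ rnd n Q j.castSucc) →
        quadForm (SigmaMat P) (fun i => coordOf (rnd n Q) i - coordOf P i)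
          ≤ (1+t) * θ^2 * quadForm (SigmaMat P) (fun i => coordOf Γ i - coordOf P i)
            + (1+1/t) * (Λ / n^2) := by
      intro Γ Q hQeq hr
      set e : Fin m → ℝ := fun j => rnd n Q j.castSucc - Q j.castSucc with hedef
      have he : ∀ j, |e j| ≤ 1/n := by
        intro j
        rw [hedef, abs_le]
        constructor
        · linarith only [(hr j).2]
        · linarith only [(hr j).1, one_div_pos.mpr hnR]
      have hfeq : (fun i => coordOf (rnd n Q) i - coordOf P i)
          = (fun i => θ * ((fun j => coordOf Γ j - coordOf P j) i) + e i) := by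
        funext i
        simp only [coordOf, hedef, hQeq]
        ring
      rw [hfeq]
      have hpert := quadForm_perturb P hPpos (fun j => coordOf Γ j - coordOf P j) e θ t ht0
      have hqe : quadForm (SigmaMat P) e ≤ Λ / n^2 := by
        have := quadForm_le P hPpos p hp hple e (1/n) (by positivity) he
        have heq : ((m:ℝ) * (1/n)^2 + ((m:ℝ)*(1/n))^2) / p = Λ / n^2 := by
          rw [hΛdef, div_div,
            div_eq_div_iff hp.ne' (mul_ne_zero hp.ne' (pow_ne_zero 2 hnR.ne'))]
          field_simp
        rw [heq] at this
        exact this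
      have h1t : (0:ℝ) ≤ 1 + 1/t := by
        have h := one_div_pos.mpr ht0
        linarith only [h]
      linarith only [hpert, mul_le_mul_of_nonneg_left hqe h1t]
    have k1 := key (Γ' n) Q' hQ'def hcsr'
    have k2 := key (Γ'' n) Q'' hQ''def hcsr''
    -- now combine
    have hcomb : (1+t) * θ^2 * (q' + q'') + (1+1/t) * (2 * (Λ / n^2)) ≤ rt n := by
      have e1 : (1+t) * θ^2 * (q' + q'') ≤ (1-t) * rt n := by
        have h2 : (1+t) * θ^2 ≤ 1 - t := by
          rw [hθdef]
          exact aux_contract t ht0 ht1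
        have h3 : q' + q'' ≤ rt n := hq
        have h4 : 0 ≤ q' + q'' := by linarith only [hq'0, hq''0]
        exact mul_le_mul h2 h3 h4 (by linarith only [ht1])
      have e2 : (1+1/t) * (2 * (Λ / n^2)) ≤ t * rt n := by
        have h5 : 1 + 1/t ≤ 2/t := by
          have h51 : (1:ℝ) ≤ 1/t := by
            rw [le_div_iff₀ ht0]; linarith only [ht1]
          have h52 : (2:ℝ)/t = 1/t + 1/t := by ring
          linarith only [h51, h52]
        have h6 : (2/t) * (2 * (Λ / n^2)) ≤ t * (c₁ / n) := by
          have ht2 : t^2 = K^2 / n := by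
            rw [htdef, div_pow, Real.sq_sqrt hnR.le]
          have hKc : 4 * Λ ≤ K^2 * c₁ := by
            rw [div_le_iff₀ hc₁] at hK2
            linarith only [hK2]
          have hLHS : (2/t) * (2 * (Λ / n^2)) = 4*Λ / (t * n^2) := by
            have ht' : t ≠ 0 := ht0.ne'
            have hn' : (n:ℝ) ≠ 0 := hnR.ne'
            field_simp
            ring
          rw [hLHS, div_le_iff₀ (mul_pos ht0 (pow_pos hnR 2))]
          have hre : t*(c₁/n)*(t*(n:ℝ)^2) = t^2 * c₁ * n := by
            have hn' : (n:ℝ) ≠ 0 := hnR.ne'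
            field_simp
          rw [hre, ht2]
          have hre2 : K^2/(n:ℝ)*c₁*n = K^2*c₁ := by field_simp
          rw [hre2]
          exact hKc
        have h7 : 0 ≤ 2 * (Λ / n^2) := by
          have h := div_nonneg hΛ.le (sq_nonneg (n:ℝ))
          linarith only [h]
        calc (1+1/t) * (2 * (Λ / n^2)) ≤ (2/t) * (2 * (Λ / n^2)) :=
              mul_le_mul_of_nonneg_right h5 h7
          _ ≤ t * (c₁ / n) := h6
          _ ≤ t * rt n := mul_le_mul_of_nonneg_left hrt₁ ht0.le
      have hsum : (1-t)*rt n + t*rt n = rt n := by ring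
      linarith only [e1, e2, hsum]
    rw [← hq'def] at k1
    rw [← hq''def] at k2
    have hexp : (1+t)*θ^2*(q'+q'') = (1+t)*θ^2*q' + (1+t)*θ^2*q'' := by ring
    have hexp2 : (1+1/t)*(2*(Λ/n^2)) = (1+1/t)*(Λ/n^2) + (1+1/t)*(Λ/n^2) := by ring
    linarith only [k1, k2, hcomb, hexp, hexp2]
  · -- the value bound
    have hscale : ellP P P₁ P₂ Q' Q'' = θ * ellP P P₁ P₂ (Γ' n) (Γ'' n) := by
      rw [hQ'def, hQ''def]
      exact ellP_scale P P₁ P₂ (Γ' n) (Γ'' n) θ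
    have hΓbound : |ellP P P₁ P₂ (Γ' n) (Γ'' n)| ≤ (m * Real.sqrt (rt n)) * M := by
      rw [hMdef]
      exact ellP_abs_bound P P₁ P₂ (Γ' n) (Γ'' n) _ hall' hall''
    have hrndbound : ∀ (Q : Fin (m+1) → ℝ),
        (∀ j : Fin m, rnd n Q j.castSucc ≤ Q j.castSucc ∧
          Q j.castSucc - 1/n ≤ rnd n Q j.castSucc) →
        (Q (Fin.last m) ≤ rnd n Q (Fin.last m) ∧
          rnd n Q (Fin.last m) ≤ Q (Fin.last m) + m/n) →
        ∀ i, |rnd n Q i - Q i| ≤ m/n := by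
      intro Q hr hrl i
      have hm1 : (1:ℝ) ≤ (m:ℝ) := by exact_mod_cast hm
      rcases Fin.eq_castSucc_or_eq_last i with ⟨j, rfl⟩ | rfl
      · have h1n' : 1/(n:ℝ) ≤ (m:ℝ)/n := by
          rw [div_le_div_iff₀ hnR hnR]
          have h := mul_le_mul_of_nonneg_right hm1 hnR.le
          linarith only [h]
        rw [abs_le]
        refine ⟨?_, ?_⟩
        · have h := (hr j).2
          linarith only [h, h1n']
        · have a1 := (hr j).1
          have hmn0 : (0:ℝ) ≤ (m:ℝ)/n := div_nonneg (Nat.cast_nonneg m) hnR.le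
          linarith only [a1, hmn0]
      · have hmn0 : (0:ℝ) ≤ (m:ℝ)/n := div_nonneg (Nat.cast_nonneg m) hnR.le
        rw [abs_le]
        constructor
        · linarith only [hrl.1, hmn0]
        · linarith only [hrl.2, hmn0]
    have hdiff : |ellP P P₁ P₂ Q' Q'' - ellP P P₁ P₂ (rnd n Q') (rnd n Q'')| ≤ (m/n) * M := by
      rw [hMdef]
      exact ellP_diff_bound P P₁ P₂ Q' Q'' (rnd n Q') (rnd n Q'') (m/n)
        (fun i => by rw [abs_sub_comm]; exact hrndbound Q' hcsr' hlastr' i)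
        (fun i => by rw [abs_sub_comm]; exact hrndbound Q'' hcsr'' hlastr'' i)
    -- assemble
    have hmain : |ellP P P₁ P₂ (Γ' n) (Γ'' n) - ellP P P₁ P₂ (rnd n Q') (rnd n Q'')|
        ≤ t * ((m * Real.sqrt (rt n)) * M) + (m/n) * M := by
      have h1 : |ellP P P₁ P₂ (Γ' n) (Γ'' n) - ellP P P₁ P₂ Q' Q''|
          = t * |ellP P P₁ P₂ (Γ' n) (Γ'' n)| := by
        rw [hscale, show ellP P P₁ P₂ (Γ' n) (Γ'' n) - θ * ellP P P₁ P₂ (Γ' n) (Γ'' n)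
          = t * ellP P P₁ P₂ (Γ' n) (Γ'' n) by rw [hθdef]; ring, abs_mul, abs_of_nonneg ht0.le]
      calc |ellP P P₁ P₂ (Γ' n) (Γ'' n) - ellP P P₁ P₂ (rnd n Q') (rnd n Q'')|
          ≤ |ellP P P₁ P₂ (Γ' n) (Γ'' n) - ellP P P₁ P₂ Q' Q''|
            + |ellP P P₁ P₂ Q' Q'' - ellP P P₁ P₂ (rnd n Q') (rnd n Q'')| :=
            abs_sub_le _ _ _
        _ ≤ t * ((m * Real.sqrt (rt n)) * M) + (m/n) * M := by
            apply add_le_add _ hdiff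
            rw [h1]
            exact mul_le_mul_of_nonneg_left hΓbound ht0.le
    have hfinal : (n:ℝ) * (t * ((m * Real.sqrt (rt n)) * M) + (m/n) * M) ≤ κ := by
      have hs1 : t * Real.sqrt (rt n) ≤ K * Real.sqrt c₂ / n := by
        have h := mul_le_mul_of_nonneg_left hsqrt_rt ht0.le
        refine h.trans (le_of_eq ?_)
        calc t * (Real.sqrt c₂ / Real.sqrt n)
            = K / Real.sqrt n * (Real.sqrt c₂ / Real.sqrt n) := by rw [htdef]
          _ = K * Real.sqrt c₂ / (Real.sqrt n * Real.sqrt n) := by ring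
          _ = K * Real.sqrt c₂ / n := by rw [Real.mul_self_sqrt hnR.le]
      have hs2 : (n:ℝ) * (t * ((m * Real.sqrt (rt n)) * M))
          ≤ K * m * M * Real.sqrt c₂ := by
        have h0 : 0 ≤ (m:ℝ) * M := mul_nonneg (Nat.cast_nonneg m) hM
        have h2 : t * Real.sqrt (rt n) * ((m:ℝ) * M) ≤ (K * Real.sqrt c₂ / n) * ((m:ℝ) * M) :=
          mul_le_mul_of_nonneg_right hs1 h0
        calc (n:ℝ) * (t * ((m * Real.sqrt (rt n)) * M))
            = (n:ℝ) * (t * Real.sqrt (rt n) * ((m:ℝ) * M)) := by ring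
          _ ≤ (n:ℝ) * ((K * Real.sqrt c₂ / n) * ((m:ℝ) * M)) :=
              mul_le_mul_of_nonneg_left h2 hnR.le
          _ = K * m * M * Real.sqrt c₂ := by
              field_simp
      have hs3 : (n:ℝ) * ((m/n) * M) = m * M := by
        have hn' : (n:ℝ) ≠ 0 := hnR.ne'
        field_simp
      have hexp : (n:ℝ) * (t * ((m * Real.sqrt (rt n)) * M) + (m/n) * M)
          = (n:ℝ) * (t * ((m * Real.sqrt (rt n)) * M)) + (n:ℝ) * ((m/n) * M) := by ring
      rw [hκdef, hexp]
      linarith only [hs2, hs3]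
    calc |(n : ℝ) * ellP P P₁ P₂ (Γ' n) (Γ'' n)
        - (n : ℝ) * ellP P P₁ P₂ (rnd n Q') (rnd n Q'')|
        = (n:ℝ) * |ellP P P₁ P₂ (Γ' n) (Γ'' n) - ellP P P₁ P₂ (rnd n Q') (rnd n Q'')| := by
          rw [← mul_sub, abs_mul, abs_of_nonneg hnR.le]
      _ ≤ (n:ℝ) * (t * ((m * Real.sqrt (rt n)) * M) + (m/n) * M) :=
          mul_le_mul_of_nonneg_left hmain hnR.le
      _ ≤ κ := hfinal
end TwoSampleTest
end
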